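/- arXiv:1302.3737 — 3 statements merged into one kernel-verified Lean document; each statement's English description precedes it below -/
import Mathlib

section
/- Let d ≥ 1 and let U be a nonempty open subset of ℝᵈ. Then there exists a subgroup of Homeo₀(ℝᵈ) isomorphic (as an abstract group) to Homeo_ℤ(ℝ) all of whose elements are supported in U (i.e., every element of the subgroup equals the identity outside U). -/
/-- The group of homeomorphisms of a topological space, with composition as
multiplication: `(f * g) x = f (g x)`. -/
instance homeoGroup {X : Type*} [TopologicalSpace X] : Group (X ≃ₜ X) where
  mul f g := g.trans f
  one := Homeomorph.refl X
  inv := Homeomorph.symm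
  mul_assoc _ _ _ := rfl
  one_mul f := Homeomorph.ext fun _ => rfl
  mul_one f := Homeomorph.ext fun _ => rfl
  inv_mul_cancel f := Homeomorph.ext fun x => f.symm_apply_apply x

/-- `f` is isotopic to the identity through a compactly supported isotopy: there is a
level-preserving homeomorphism `H` of `X × [0,1]` (so each time slice `H (·, t)` is a
homeomorphism of `X`, varying continuously in `t`), supported in a fixed compact set `K`,
which is the identity at time `0` and equals `f` at time `1`. -/
def IsotopicToIdC {X : Type*} [TopologicalSpace X] (f : X ≃ₜ X) : Prop :=
  ∃ H : (X × unitInterval) ≃ₜ (X × unitInterval), ∃ K : Set X, IsCompact K ∧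
    (∀ p : X × unitInterval, (H p).2 = p.2) ∧
    (∀ x : X, H (x, 0) = (x, 0)) ∧
    (∀ x : X, H (x, 1) = (f x, 1)) ∧
    (∀ t : unitInterval, ∀ x ∉ K, H (x, t) = (x, t))

/-- `Homeo0 X`: the group of compactly supported homeomorphisms of `X` which are
isotopic to the identity through a compactly supported isotopy. -/
def Homeo0 (X : Type*) [TopologicalSpace X] : Subgroup (X ≃ₜ X) where
  carrier := {f | IsotopicToIdC f}
  one_mem' := ⟨Homeomorph.refl _, ∅, isCompact_empty, fun _ => rfl, fun _ => rfl,
    fun _ => rfl, fun _ _ _ => rfl⟩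
  mul_mem' := by
    rintro f g ⟨H₁, K₁, hK₁, hl₁, h0₁, h1₁, hs₁⟩ ⟨H₂, K₂, hK₂, hl₂, h0₂, h1₂, hs₂⟩
    refine ⟨H₂.trans H₁, K₁ ∪ K₂, hK₁.union hK₂, fun p => ?_, fun x => ?_, fun x => ?_,
      fun t x hx => ?_⟩
    · show (H₁ (H₂ p)).2 = p.2
      rw [hl₁, hl₂]
    · show H₁ (H₂ (x, 0)) = (x, 0)
      rw [h0₂, h0₁]
    · show H₁ (H₂ (x, 1)) = ((f * g) x, 1)
      rw [h1₂, h1₁]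
      rfl
    · show H₁ (H₂ (x, t)) = (x, t)
      rw [hs₂ t x fun h => hx (Or.inr h), hs₁ t x fun h => hx (Or.inl h)]
  inv_mem' := by
    rintro f ⟨H, K, hK, hl, h0, h1, hs⟩
    refine ⟨H.symm, K, hK, fun p => ?_, fun x => ?_, fun x => ?_, fun t x hx => ?_⟩
    · conv_rhs => rw [← H.apply_symm_apply p]
      rw [hl]
    · conv_lhs => rw [← h0 x]
      exact H.symm_apply_apply _
    · have : H ((f⁻¹ : X ≃ₜ X) x, 1) = (x, 1) := by
        rw [h1]
        show (f (f.symm x), 1) = (x, 1)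
        rw [f.apply_symm_apply]
      rw [← this, H.symm_apply_apply]
    · conv_lhs => rw [← hs t x hx]
      exact H.symm_apply_apply _

/-- `Homeo_ℤ(ℝ)`: the group of homeomorphisms `f` of `ℝ` with `f (x + 1) = f x + 1`
for all `x`. -/
def HomeoZ : Subgroup (ℝ ≃ₜ ℝ) where
  carrier := {f | ∀ x : ℝ, f (x + 1) = f x + 1}
  one_mem' := fun _ => rfl
  mul_mem' := by
    intro f g hf hg x
    show f (g (x + 1)) = f (g x) + 1
    rw [hg, hf]
  inv_mem' := by
    intro f hf x
    apply f.injective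
    show f (f.symm (x + 1)) = f (f.symm x + 1)
    rw [hf, f.apply_symm_apply, f.apply_symm_apply]


open Set

noncomputable def sig (x : ℝ) : ℝ := (x / (1 + |x|) + 1) / 2
noncomputable def tau (y : ℝ) : ℝ := (2 * y - 1) / (1 - |2 * y - 1|)

lemma abs_lt_one_aux (x : ℝ) : |x / (1 + |x|)| < 1 := by
  have h : (0:ℝ) < 1 + |x| := by positivity
  rw [abs_div, abs_of_pos h, div_lt_one h]
  linarith

lemma sig_mem (x : ℝ) : sig x ∈ Ioo (0:ℝ) 1 := by
  have := abs_lt_one_aux x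
  have h1 := abs_lt.1 this
  constructor <;> simp only [sig] <;> nlinarith [h1.1, h1.2]

lemma sig_strictMono : StrictMono sig := by
  intro x y hxy
  have hx : (0:ℝ) < 1 + |x| := by positivity
  have hy : (0:ℝ) < 1 + |y| := by positivity
  have : x / (1 + |x|) < y / (1 + |y|) := by
    rw [div_lt_div_iff₀ hx hy]
    rcases abs_cases x with ⟨hx1, hx2⟩ <;> rcases abs_cases y with ⟨hy1, hy2⟩ <;>
      nlinarith
  simp only [sig]
  linarith

lemma tau_sig (x : ℝ) : tau (sig x) = x := by
  have h : (0:ℝ) < 1 + |x| := by positivity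
  have h2 : 2 * sig x - 1 = x / (1 + |x|) := by simp only [sig]; ring
  have h3 : |x / (1 + |x|)| = |x| / (1 + |x|) := by
    rw [abs_div, abs_of_pos h]
  have h4 : 1 - |x| / (1 + |x|) = 1 / (1 + |x|) := by field_simp; ring
  rw [tau, h2, h3, h4]
  field_simp

lemma sig_tau {y : ℝ} (hy : y ∈ Ioo (0:ℝ) 1) : sig (tau y) = y := by
  set z := 2 * y - 1 with hz
  have hz1 : |z| < 1 := by rw [abs_lt]; constructor <;> [linarith [hy.1]; linarith [hy.2]]
  have hzpos : (0:ℝ) < 1 - |z| := by linarith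
  have h3 : |z / (1 - |z|)| = |z| / (1 - |z|) := by
    rw [abs_div, abs_of_pos hzpos]
  have h4 : 1 + |z| / (1 - |z|) = 1 / (1 - |z|) := by field_simp; ring
  have h5 : tau y = z / (1 - |z|) := rfl
  rw [sig, h5, h3, h4]
  have : z / (1 - |z|) / (1 / (1 - |z|)) = z := by
    field_simp
  rw [this]
  simp only [hz]; ring

/-- compression of a map of `ℝ` into `(0,1)`, extended by the identity -/
noncomputable def ee (f : ℝ → ℝ) (x : ℝ) : ℝ :=
  if x ∈ Ioo (0:ℝ) 1 then sig (f (tau x)) else x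

lemma ee_of_mem {f : ℝ → ℝ} {x : ℝ} (h : x ∈ Ioo (0:ℝ) 1) : ee f x = sig (f (tau x)) :=
  if_pos h

lemma ee_of_not_mem (f : ℝ → ℝ) {x : ℝ} (h : x ∉ Ioo (0:ℝ) 1) : ee f x = x := if_neg h

lemma ee_mem (f : ℝ → ℝ) {x : ℝ} (h : x ∈ Ioo (0:ℝ) 1) : ee f x ∈ Ioo (0:ℝ) 1 := by
  rw [ee_of_mem h]; exact sig_mem _

lemma ee_comp (f g : ℝ → ℝ) (x : ℝ) : ee f (ee g x) = ee (f ∘ g) x := by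
  by_cases h : x ∈ Ioo (0:ℝ) 1
  · rw [ee_of_mem h, ee_of_mem (sig_mem _), tau_sig, ee_of_mem h]; rfl
  · rw [ee_of_not_mem g h, ee_of_not_mem f h, ee_of_not_mem _ h]

lemma ee_id (x : ℝ) : ee id x = x := by
  by_cases h : x ∈ Ioo (0:ℝ) 1
  · rw [ee_of_mem h]; exact sig_tau h
  · exact ee_of_not_mem _ h

lemma ee_bound (f : ℝ → ℝ) (x : ℝ) : |ee f x - x| ≤ 1 := by
  by_cases h : x ∈ Ioo (0:ℝ) 1
  · have h1 := ee_mem f h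
    rw [abs_le]; constructor <;> [linarith [h1.1, h.2]; linarith [h1.2, h.1]]
  · rw [ee_of_not_mem f h, sub_self, abs_zero]; exact zero_le_one

lemma ee_strictMono {f : ℝ → ℝ} (hf : StrictMono f) : StrictMono (ee f) := by
  intro x y hxy
  by_cases hx : x ∈ Ioo (0:ℝ) 1 <;> by_cases hy : y ∈ Ioo (0:ℝ) 1
  · rw [ee_of_mem hx, ee_of_mem hy]
    have : tau x < tau y := by
      have := sig_strictMono.lt_iff_lt (a := tau x) (b := tau y)
      rw [← this, sig_tau hx, sig_tau hy]; exact hxy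
    exact sig_strictMono (hf this)
  · have h1 : (1:ℝ) ≤ y := by
      rcases not_and_or.1 hy with h | h
      · exfalso; exact h (hx.1.trans hxy)
      · linarith [not_lt.1 h]
    rw [ee_of_not_mem f hy]
    exact lt_of_lt_of_le (ee_mem f hx).2 h1
  · have h1 : x ≤ 0 := by
      rcases not_and_or.1 hx with h | h
      · linarith [not_lt.1 h]
      · exfalso; exact h (hxy.trans hy.2)
    rw [ee_of_not_mem f hx]
    exact lt_of_le_of_lt h1 (ee_mem f hy).1
  · rw [ee_of_not_mem f hx, ee_of_not_mem f hy]; exact hxy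

lemma ee_surj {f : ℝ → ℝ} (hf : Function.Surjective f) : Function.Surjective (ee f) := by
  intro y
  by_cases hy : y ∈ Ioo (0:ℝ) 1
  · obtain ⟨x, hx⟩ := hf (tau y)
    refine ⟨sig x, ?_⟩
    rw [ee_of_mem (sig_mem x), tau_sig, hx, sig_tau hy]
  · exact ⟨y, ee_of_not_mem f hy⟩

lemma ee_continuous {f : ℝ → ℝ} (hm : StrictMono f) (hs : Function.Surjective f) :
    Continuous (ee f) := by
  have h := OrderIso.continuous
    (StrictMono.orderIsoOfSurjective (ee f) (ee_strictMono hm) (ee_surj hs))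
  rwa [StrictMono.coe_orderIsoOfSurjective] at h

lemma HomeoZ_strictMono (f : ℝ ≃ₜ ℝ) (hf : ∀ x : ℝ, f (x + 1) = f x + 1) : StrictMono f := by
  rcases f.continuous.strictMono_of_inj f.injective with h | h
  · exact h
  · exfalso
    have h1 : f (0 + 1) = f 0 + 1 := hf 0
    have h2 : f (0 + 1) < f 0 := by
      have : (0:ℝ) < 0 + 1 := by norm_num
      exact h this
    linarith

noncomputable def AA (e : ℝ → ℝ) (s y : ℝ) : ℝ := if 0 < s then s * e (y / s) else y

lemma AA_of_pos (e : ℝ → ℝ) {s : ℝ} (h : 0 < s) (y : ℝ) : AA e s y = s * e (y / s) := if_pos h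
lemma AA_of_nonpos (e : ℝ → ℝ) {s : ℝ} (h : ¬ 0 < s) (y : ℝ) : AA e s y = y := if_neg h

lemma AA_comp (e₁ e₂ : ℝ → ℝ) (s y : ℝ) : AA e₁ s (AA e₂ s y) = AA (e₁ ∘ e₂) s y := by
  by_cases h : 0 < s
  · rw [AA_of_pos _ h, AA_of_pos _ h, AA_of_pos _ h, mul_div_cancel_left₀ _ h.ne']
    rfl
  · rw [AA_of_nonpos _ h, AA_of_nonpos _ h, AA_of_nonpos _ h]

lemma AA_of_id {e : ℝ → ℝ} (he : ∀ x, e x = x) (s y : ℝ) : AA e s y = y := by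
  by_cases h : 0 < s
  · rw [AA_of_pos _ h, he, mul_div_cancel₀ _ h.ne']
  · exact AA_of_nonpos _ h _

lemma AA_ne {e : ℝ → ℝ} (he : ∀ x ∉ Ioo (0:ℝ) 1, e x = x) {s y : ℝ}
    (h : AA e s y ≠ y) : 0 < s ∧ 0 < y ∧ y < s := by
  by_cases hs : 0 < s
  · rw [AA_of_pos _ hs] at h
    by_cases hm : y / s ∈ Ioo (0:ℝ) 1
    · have h1 : 0 < y := by
        have := mul_pos hm.1 hs
        rwa [div_mul_cancel₀ _ hs.ne'] at this
      exact ⟨hs, h1, (div_lt_one hs).1 hm.2⟩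
    · exfalso; rw [he _ hm, mul_div_cancel₀ _ hs.ne'] at h; exact h rfl
  · exfalso; rw [AA_of_nonpos _ hs] at h; exact h rfl

lemma AA_bound {e : ℝ → ℝ} (hb : ∀ x, |e x - x| ≤ 1) (s y : ℝ) : |AA e s y - y| ≤ |s| := by
  by_cases h : 0 < s
  · rw [AA_of_pos _ h]
    have : s * e (y / s) - y = s * (e (y / s) - y / s) := by
      rw [mul_sub, mul_div_cancel₀ _ h.ne']
    rw [this, abs_mul]
    calc |s| * |e (y / s) - y / s| ≤ |s| * 1 := by
          exact mul_le_mul_of_nonneg_left (hb _) (abs_nonneg s)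
      _ = |s| := mul_one _
  · rw [AA_of_nonpos _ h, sub_self, abs_zero]; positivity

lemma AA_continuous {e : ℝ → ℝ} (he : Continuous e) (hb : ∀ x, |e x - x| ≤ 1) :
    Continuous (fun p : ℝ × ℝ => AA e p.1 p.2) := by
  rw [continuous_iff_continuousAt]
  rintro ⟨s₀, y₀⟩
  rcases lt_trichotomy s₀ 0 with h | h | h
  · have hev : ∀ᶠ p : ℝ × ℝ in nhds (s₀, y₀), p.2 = AA e p.1 p.2 := by
      have hop : IsOpen {p : ℝ × ℝ | p.1 < 0} := isOpen_lt continuous_fst continuous_const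
      filter_upwards [hop.mem_nhds (by exact h)] with p hp
      rw [AA_of_nonpos _ (by exact not_lt.2 hp.le)]
    exact ContinuousAt.congr continuousAt_snd hev
  · subst h
    rw [ContinuousAt, AA_of_nonpos _ (lt_irrefl 0)]
    rw [tendsto_iff_dist_tendsto_zero]
    apply squeeze_zero (fun p => dist_nonneg) (g := fun p : ℝ × ℝ => |p.1| + dist p.2 y₀)
    · intro p
      calc dist (AA e p.1 p.2) y₀ ≤ dist (AA e p.1 p.2) p.2 + dist p.2 y₀ := dist_triangle _ _ _
        _ ≤ |p.1| + dist p.2 y₀ := by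
            rw [Real.dist_eq]
            exact add_le_add (AA_bound hb _ _) le_rfl
    · have : Continuous (fun p : ℝ × ℝ => |p.1| + dist p.2 y₀) := by
        apply Continuous.add (continuous_fst.abs) (continuous_snd.dist continuous_const)
      have h0 := this.tendsto (0, y₀)
      simpa using h0
  · have hc : ContinuousAt (fun p : ℝ × ℝ => p.1 * e (p.2 / p.1)) (s₀, y₀) := by
      exact ContinuousAt.mul continuousAt_fst
        (he.continuousAt.comp (ContinuousAt.div continuousAt_snd continuousAt_fst h.ne'))
    apply hc.congr
    have hop : IsOpen {p : ℝ × ℝ | 0 < p.1} := isOpen_lt continuous_const continuous_fst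
    filter_upwards [hop.mem_nhds (by exact h)] with p hp
    rw [AA_of_pos _ hp]
section Euc
variable {d : ℕ} (i0 : Fin d) (c : EuclideanSpace ℝ (Fin d)) (ε : ℝ)

noncomputable def rho (x : EuclideanSpace ℝ (Fin d)) : ℝ :=
  max 0 (1 - (4 / ε ^ 2) * ∑ i ∈ Finset.univ.erase i0, (x i - c i) ^ 2)

lemma rho_nonneg (x : EuclideanSpace ℝ (Fin d)) : 0 ≤ rho i0 c ε x := le_max_left _ _

lemma rho_le_one (x : EuclideanSpace ℝ (Fin d)) : rho i0 c ε x ≤ 1 := by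
  apply max_le zero_le_one
  have h1 : (0:ℝ) ≤ 4 / ε ^ 2 := by positivity
  have h2 : (0:ℝ) ≤ ∑ i ∈ Finset.univ.erase i0, (x i - c i) ^ 2 :=
    Finset.sum_nonneg fun i _ => sq_nonneg _
  nlinarith

lemma euclidean_apply_continuous (i : Fin d) :
    Continuous (fun x : EuclideanSpace ℝ (Fin d) => x i) :=
  (continuous_apply i).comp (EuclideanSpace.equiv (Fin d) ℝ).continuous

lemma rho_continuous : Continuous (rho i0 c ε) := by
  apply Continuous.max continuous_const
  apply Continuous.sub continuous_const
  apply Continuous.mul continuous_const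
  apply continuous_finset_sum
  intro i _
  exact ((euclidean_apply_continuous i).sub continuous_const).pow 2

noncomputable def Ft (e : ℝ → ℝ) (t : ℝ) (x : EuclideanSpace ℝ (Fin d)) :
    EuclideanSpace ℝ (Fin d) :=
  (EuclideanSpace.equiv (Fin d) ℝ).symm fun i =>
    if i = i0 then c i0 + AA e (t * (ε / 2) * rho i0 c ε x) (x i0 - c i0) else x i

lemma Ft_apply_i0 (e : ℝ → ℝ) (t : ℝ) (x : EuclideanSpace ℝ (Fin d)) :
    Ft i0 c ε e t x i0 = c i0 + AA e (t * (ε / 2) * rho i0 c ε x) (x i0 - c i0) := if_pos rfl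

lemma Ft_apply_ne (e : ℝ → ℝ) (t : ℝ) (x : EuclideanSpace ℝ (Fin d)) {i : Fin d}
    (h : i ≠ i0) : Ft i0 c ε e t x i = x i := if_neg h

lemma rho_Ft (e : ℝ → ℝ) (t : ℝ) (x : EuclideanSpace ℝ (Fin d)) :
    rho i0 c ε (Ft i0 c ε e t x) = rho i0 c ε x := by
  have hsum : ∑ i ∈ Finset.univ.erase i0, (Ft i0 c ε e t x i - c i) ^ 2
      = ∑ i ∈ Finset.univ.erase i0, (x i - c i) ^ 2 := by
    apply Finset.sum_congr rfl
    intro i hi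
    rw [Ft_apply_ne i0 c ε e t x (Finset.ne_of_mem_erase hi)]
  rw [rho, rho, hsum]

lemma Ft_comp (e₁ e₂ : ℝ → ℝ) (t : ℝ) (x : EuclideanSpace ℝ (Fin d)) :
    Ft i0 c ε e₁ t (Ft i0 c ε e₂ t x) = Ft i0 c ε (e₁ ∘ e₂) t x := by
  ext i
  by_cases h : i = i0
  · rw [h]
    simp only [Ft_apply_i0, rho_Ft]
    rw [add_sub_cancel_left, AA_comp]
  · rw [Ft_apply_ne _ _ _ _ _ _ h, Ft_apply_ne _ _ _ _ _ _ h, Ft_apply_ne _ _ _ _ _ _ h]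

lemma Ft_of_id {e : ℝ → ℝ} (he : ∀ x, e x = x) (t : ℝ) (x : EuclideanSpace ℝ (Fin d)) :
    Ft i0 c ε e t x = x := by
  ext i
  by_cases h : i = i0
  · rw [h, Ft_apply_i0, AA_of_id he, add_sub_cancel]
  · exact Ft_apply_ne _ _ _ _ _ _ h

lemma Ft_zero (e : ℝ → ℝ) (x : EuclideanSpace ℝ (Fin d)) : Ft i0 c ε e 0 x = x := by
  ext i
  by_cases h : i = i0
  · rw [h, Ft_apply_i0, zero_mul, zero_mul, AA_of_nonpos _ (lt_irrefl 0), add_sub_cancel]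
  · exact Ft_apply_ne _ _ _ _ _ _ h

lemma Ft_continuous {X : Type*} [TopologicalSpace X] {e : ℝ → ℝ} (hec : Continuous e)
    (heb : ∀ x, |e x - x| ≤ 1) {g : X → ℝ} (hg : Continuous g)
    {h : X → EuclideanSpace ℝ (Fin d)} (hh : Continuous h) :
    Continuous (fun a => Ft i0 c ε e (g a) (h a)) := by
  apply (EuclideanSpace.equiv (Fin d) ℝ).symm.continuous.comp
  apply continuous_pi
  intro i
  by_cases hi : i = i0
  · subst hi
    simp only [if_pos]
    apply Continuous.add continuous_const
    have hA := AA_continuous hec heb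
    have h1 : Continuous fun a => g a * (ε / 2) * rho i c ε (h a) :=
      ((hg.mul continuous_const).mul ((rho_continuous i c ε).comp hh))
    have h2 : Continuous fun a => h a i - c i :=
      ((euclidean_apply_continuous i).comp hh).sub continuous_const
    exact hA.comp (h1.prodMk h2)
  · simp only [if_neg hi]
    exact (euclidean_apply_continuous i).comp hh

lemma Ft_ne {e : ℝ → ℝ} (he : ∀ x ∉ Ioo (0:ℝ) 1, e x = x) {t : ℝ} (ht0 : 0 ≤ t)
    (ht1 : t ≤ 1) (hε : 0 < ε) {x : EuclideanSpace ℝ (Fin d)}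
    (h : Ft i0 c ε e t x ≠ x) : dist x c < ε := by
  have hi0 : Ft i0 c ε e t x i0 ≠ x i0 := by
    intro hc
    apply h
    ext i
    by_cases hi : i = i0
    · subst hi; exact hc
    · exact Ft_apply_ne _ _ _ _ _ _ hi
  rw [Ft_apply_i0] at hi0
  have hAA : AA e (t * (ε / 2) * rho i0 c ε x) (x i0 - c i0) ≠ x i0 - c i0 := by
    intro hc
    apply hi0
    rw [hc]; ring
  obtain ⟨hs, hy, hys⟩ := AA_ne he hAA
  have hrho : 0 < rho i0 c ε x := by
    rcases (rho_nonneg i0 c ε x).lt_or_eq with h' | h'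
    · exact h'
    · exfalso; rw [← h', mul_zero] at hs; exact lt_irrefl 0 hs
  have hsum : ∑ i ∈ Finset.univ.erase i0, (x i - c i) ^ 2 < ε ^ 2 / 4 := by
    have : 0 < 1 - (4 / ε ^ 2) * ∑ i ∈ Finset.univ.erase i0, (x i - c i) ^ 2 := by
      rcases max_cases (0:ℝ) (1 - (4 / ε ^ 2) * ∑ i ∈ Finset.univ.erase i0, (x i - c i) ^ 2)
        with ⟨h1, h2⟩ | ⟨h1, h2⟩
      · exfalso; rw [rho] at hrho; rw [h1] at hrho; exact lt_irrefl 0 hrho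
      · rw [rho] at hrho; rwa [h1] at hrho
    by_contra hcon
    push_neg at hcon
    have h4 : (0:ℝ) ≤ 4 / ε ^ 2 := by positivity
    have h5 : 4 / ε ^ 2 * (ε ^ 2 / 4) = 1 := by field_simp
    have h6 := mul_le_mul_of_nonneg_left hcon h4
    linarith
  have hslt : t * (ε / 2) * rho i0 c ε x ≤ ε / 2 := by
    have h1 : t * (ε / 2) * rho i0 c ε x ≤ t * (ε / 2) * 1 :=
      mul_le_mul_of_nonneg_left (rho_le_one _ _ _ _) (mul_nonneg ht0 (by linarith))
    nlinarith
  have hy2 : (x i0 - c i0) ^ 2 < ε ^ 2 / 4 := by nlinarith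
  have hd : dist x c = Real.sqrt (∑ i, (x i - c i) ^ 2) := by
    rw [EuclideanSpace.dist_eq]
    congr 1
    apply Finset.sum_congr rfl
    intro i _
    rw [Real.dist_eq]
    rw [sq_abs]
  rw [hd]
  rw [show ε = Real.sqrt (ε ^ 2) by rw [Real.sqrt_sq hε.le]]
  apply Real.sqrt_lt_sqrt (Finset.sum_nonneg fun i _ => sq_nonneg _)
  rw [← Finset.add_sum_erase _ _ (Finset.mem_univ i0)]
  nlinarith

end Euc

section Euc2
variable {d : ℕ} (i0 : Fin d) (c : EuclideanSpace ℝ (Fin d)) (ε : ℝ)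

lemma Ft_inv {f g : ℝ → ℝ} (hg : ∀ y, g (f y) = y) (t : ℝ)
    (x : EuclideanSpace ℝ (Fin d)) :
    Ft i0 c ε (ee g) t (Ft i0 c ε (ee f) t x) = x := by
  rw [Ft_comp]
  apply Ft_of_id
  intro y
  show ee g (ee f y) = y
  rw [ee_comp]
  have : (g ∘ f) = id := funext hg
  rw [this, ee_id]

/-- the special evaluation point used for injectivity -/
noncomputable def specPt (x₀ : ℝ) : EuclideanSpace ℝ (Fin d) :=
  (EuclideanSpace.equiv (Fin d) ℝ).symm fun i =>
    if i = i0 then c i0 + (ε / 2) * sig x₀ else c i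

lemma rho_specPt (x₀ : ℝ) : rho i0 c ε (specPt i0 c ε x₀) = 1 := by
  have hsum : ∑ i ∈ Finset.univ.erase i0, (specPt i0 c ε x₀ i - c i) ^ 2 = 0 := by
    apply Finset.sum_eq_zero
    intro i hi
    have : specPt i0 c ε x₀ i = c i := if_neg (Finset.ne_of_mem_erase hi)
    rw [this, sub_self]
    norm_num
  rw [rho, hsum, mul_zero, sub_zero, max_eq_right zero_le_one]

lemma Ft_specPt (hε : 0 < ε) (e : ℝ → ℝ) (x₀ : ℝ) :
    Ft i0 c ε e 1 (specPt i0 c ε x₀) i0 = c i0 + (ε / 2) * e (sig x₀) := by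
  have h2 : (0:ℝ) < ε / 2 := by linarith
  have hpt : specPt i0 c ε x₀ i0 = c i0 + (ε / 2) * sig x₀ := if_pos rfl
  rw [Ft_apply_i0, rho_specPt, hpt, one_mul, mul_one, add_sub_cancel_left,
    AA_of_pos _ h2, mul_div_cancel_left₀ _ h2.ne']

end Euc2

/-- For any nonempty open subset `U` of `ℝ^d` there is a subgroup of `Homeo₀(ℝ^d)`
abstractly isomorphic to `Homeo_ℤ(ℝ)` all of whose elements are supported in `U`. -/
theorem stmt_12 {d : ℕ} (hd : 1 ≤ d)
    (U : Set (EuclideanSpace ℝ (Fin d))) (hU : IsOpen U) (hUne : U.Nonempty) :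
    ∃ G : Subgroup (Homeo0 (EuclideanSpace ℝ (Fin d))), Nonempty (G ≃* HomeoZ) ∧
      ∀ f ∈ G, ∀ x ∉ U,
        (f : EuclideanSpace ℝ (Fin d) ≃ₜ EuclideanSpace ℝ (Fin d)) x = x := by
  classical
  obtain ⟨c, hcU⟩ := hUne
  obtain ⟨ε, hε, hball⟩ := Metric.isOpen_iff.1 hU c hcU
  have h0d : 0 < d := hd
  set i0 : Fin d := ⟨0, h0d⟩ with hi0
  have hmono : ∀ f : HomeoZ, StrictMono ⇑(f : ℝ ≃ₜ ℝ) := fun f => HomeoZ_strictMono _ f.2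
  have hcont : ∀ f : HomeoZ, Continuous (ee ⇑(f : ℝ ≃ₜ ℝ)) := fun f =>
    ee_continuous (hmono f) (f : ℝ ≃ₜ ℝ).surjective
  have hli : ∀ f : HomeoZ, ∀ y : ℝ,
      (((f⁻¹ : HomeoZ) : ℝ ≃ₜ ℝ)) (((f : HomeoZ) : ℝ ≃ₜ ℝ) y) = y := fun f y =>
    (f : ℝ ≃ₜ ℝ).symm_apply_apply y
  have hri : ∀ f : HomeoZ, ∀ y : ℝ,
      (((f : HomeoZ) : ℝ ≃ₜ ℝ)) (((f⁻¹ : HomeoZ) : ℝ ≃ₜ ℝ) y) = y := fun f y =>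
    (f : ℝ ≃ₜ ℝ).apply_symm_apply y
  let Phi : HomeoZ → (EuclideanSpace ℝ (Fin d) ≃ₜ EuclideanSpace ℝ (Fin d)) := fun f =>
    { toFun := Ft i0 c ε (ee ⇑(f : ℝ ≃ₜ ℝ)) 1
      invFun := Ft i0 c ε (ee ⇑((f⁻¹ : HomeoZ) : ℝ ≃ₜ ℝ)) 1
      left_inv := fun x => Ft_inv i0 c ε (hli f) 1 x
      right_inv := fun x => Ft_inv i0 c ε (hri f) 1 x
      continuous_toFun :=
        Ft_continuous i0 c ε (hcont f) (ee_bound _) continuous_const continuous_id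
      continuous_invFun :=
        Ft_continuous i0 c ε (hcont f⁻¹) (ee_bound _) continuous_const continuous_id }
  have hmem : ∀ f : HomeoZ, Phi f ∈ Homeo0 (EuclideanSpace ℝ (Fin d)) := by
    intro f
    refine ⟨{ toFun := fun p => (Ft i0 c ε (ee ⇑(f : ℝ ≃ₜ ℝ)) (p.2 : ℝ) p.1, p.2)
              invFun := fun p => (Ft i0 c ε (ee ⇑((f⁻¹ : HomeoZ) : ℝ ≃ₜ ℝ)) (p.2 : ℝ) p.1, p.2)
              left_inv := fun p => Prod.ext (Ft_inv i0 c ε (hli f) _ _) rfl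
              right_inv := fun p => Prod.ext (Ft_inv i0 c ε (hri f) _ _) rfl
              continuous_toFun := Continuous.prodMk
                (Ft_continuous i0 c ε (hcont f) (ee_bound _)
                  (continuous_subtype_val.comp continuous_snd) continuous_fst)
                continuous_snd
              continuous_invFun := Continuous.prodMk
                (Ft_continuous i0 c ε (hcont f⁻¹) (ee_bound _)
                  (continuous_subtype_val.comp continuous_snd) continuous_fst)
                continuous_snd },
      Metric.closedBall c ε, isCompact_closedBall c ε, fun p => rfl, fun x => ?_, fun x => ?_,
      fun t x hx => ?_⟩
    · show (Ft i0 c ε (ee ⇑(f : ℝ ≃ₜ ℝ)) ((0 : unitInterval) : ℝ) x, (0 : unitInterval))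
        = (x, 0)
      rw [show ((0 : unitInterval) : ℝ) = 0 from rfl, Ft_zero]
    · show (Ft i0 c ε (ee ⇑(f : ℝ ≃ₜ ℝ)) ((1 : unitInterval) : ℝ) x, (1 : unitInterval))
        = (Phi f x, 1)
      rfl
    · show (Ft i0 c ε (ee ⇑(f : ℝ ≃ₜ ℝ)) ((t : unitInterval) : ℝ) x, t) = (x, t)
      refine Prod.ext ?_ rfl
      by_contra hne
      have hlt := Ft_ne i0 c ε (fun y hy => ee_of_not_mem _ hy) t.2.1 t.2.2 hε hne
      exact hx (Metric.mem_closedBall.2 hlt.le)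
  have hmul : ∀ f g : HomeoZ,
      (⟨Phi (f * g), hmem _⟩ : Homeo0 (EuclideanSpace ℝ (Fin d))) =
        ⟨Phi f, hmem f⟩ * ⟨Phi g, hmem g⟩ := by
    intro f g
    apply Subtype.ext
    apply Homeomorph.ext
    intro x
    show Ft i0 c ε (ee ⇑((f * g : HomeoZ) : ℝ ≃ₜ ℝ)) 1 x =
      Ft i0 c ε (ee ⇑(f : ℝ ≃ₜ ℝ)) 1 (Ft i0 c ε (ee ⇑(g : ℝ ≃ₜ ℝ)) 1 x)
    rw [Ft_comp]
    have he : ee ⇑(f : ℝ ≃ₜ ℝ) ∘ ee ⇑(g : ℝ ≃ₜ ℝ) = ee ⇑((f * g : HomeoZ) : ℝ ≃ₜ ℝ) :=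
      funext fun y => ee_comp ⇑(f : ℝ ≃ₜ ℝ) ⇑(g : ℝ ≃ₜ ℝ) y
    rw [he]
  let Psi : HomeoZ →* Homeo0 (EuclideanSpace ℝ (Fin d)) :=
    MonoidHom.mk' (fun f => ⟨Phi f, hmem f⟩) hmul
  have hinj : Function.Injective Psi := by
    intro f g hfg
    have h1 : Phi f = Phi g := Subtype.ext_iff.1 hfg
    apply Subtype.ext
    apply Homeomorph.ext
    intro x₀
    have h2 := congrArg
      (fun F : EuclideanSpace ℝ (Fin d) ≃ₜ EuclideanSpace ℝ (Fin d) =>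
        F (specPt i0 c ε x₀) i0) h1
    have h2' : Ft i0 c ε (ee ⇑(f : ℝ ≃ₜ ℝ)) 1 (specPt i0 c ε x₀) i0 =
        Ft i0 c ε (ee ⇑(g : ℝ ≃ₜ ℝ)) 1 (specPt i0 c ε x₀) i0 := h2
    rw [Ft_specPt i0 c ε hε, Ft_specPt i0 c ε hε] at h2'
    have hε2 : (ε / 2) ≠ 0 := by positivity
    have h3 := mul_left_cancel₀ hε2 (add_left_cancel h2')
    rw [ee_of_mem (sig_mem x₀), ee_of_mem (sig_mem x₀), tau_sig] at h3
    exact sig_strictMono.injective h3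
  refine ⟨Psi.range, ⟨(MonoidHom.ofInjective hinj).symm⟩, ?_⟩
  rintro F ⟨g, rfl⟩ x hx
  show Ft i0 c ε (ee ⇑(g : ℝ ≃ₜ ℝ)) 1 x = x
  by_contra hne
  have hlt := Ft_ne i0 c ε (fun y hy => ee_of_not_mem _ hy) zero_le_one le_rfl hε hne
  exact hx (hball (Metric.mem_ball.2 hlt))
end

section
/- Every group homomorphism from Homeo_ℤ(ℝ) to ℤ is trivial. Equivalently, every element of Homeo_ℤ(ℝ) is a product of commutators of elements of Homeo_ℤ(ℝ). -/
namespace HZaux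

open Function Set Filter Topology Real
open scoped commutatorElement

noncomputable def ap (f : HomeoZ) (x : ℝ) : ℝ := (f : ℝ ≃ₜ ℝ) x

lemma ap_mul (f g : HomeoZ) (x : ℝ) : ap (f * g) x = ap f (ap g x) := rfl

lemma ap_one (x : ℝ) : ap 1 x = x := rfl

lemma ap_inv_ap (f : HomeoZ) (x : ℝ) : ap f⁻¹ (ap f x) = x :=
  (f : ℝ ≃ₜ ℝ).symm_apply_apply x

lemma ap_ap_inv (f : HomeoZ) (x : ℝ) : ap f (ap f⁻¹ x) = x :=
  (f : ℝ ≃ₜ ℝ).apply_symm_apply x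

lemma ap_per (f : HomeoZ) : ∀ x, ap f (x + 1) = ap f x + 1 := f.2

lemma ap_continuous (f : HomeoZ) : Continuous (ap f) := (f : ℝ ≃ₜ ℝ).continuous

lemma ap_mono (f : HomeoZ) : StrictMono (ap f) := by
  rcases (ap_continuous f).strictMono_of_inj (f : ℝ ≃ₜ ℝ).injective with h | h
  · exact h
  · exfalso
    have h1 : ap f (0 + 1) = ap f 0 + 1 := ap_per f 0
    have h2 : ap f (0 + 1) < ap f 0 := h (by norm_num)
    linarith

lemma per_int {F : ℝ → ℝ} (h : ∀ x, F (x + 1) = F x + 1) (x : ℝ) (k : ℤ) :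
    F (x + k) = F x + k := by
  induction k using Int.induction_on with
  | zero => simp
  | succ n ih =>
    have e1 : x + ((n : ℤ) + 1 : ℤ) = (x + (n : ℤ)) + 1 := by push_cast; ring
    rw [e1, h, ih]; push_cast; ring
  | pred n ih =>
    have e1 : (x + (-(n : ℤ) - 1 : ℤ)) + 1 = x + (-(n : ℤ) : ℤ) := by push_cast; ring
    have h2 := h (x + (-(n : ℤ) - 1 : ℤ))
    rw [e1, ih] at h2
    push_cast at h2 ⊢
    linarith

lemma ap_zper (f : HomeoZ) (x : ℝ) (k : ℤ) : ap f (x + k) = ap f x + k :=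
  per_int (ap_per f) x k

noncomputable def mk (F : ℝ → ℝ) (h1 : StrictMono F) (h2 : Surjective F)
    (h3 : ∀ x, F (x + 1) = F x + 1) : HomeoZ :=
  ⟨(StrictMono.orderIsoOfSurjective F h1 h2).toHomeomorph, h3⟩

lemma ap_mk (F : ℝ → ℝ) (h1 : StrictMono F) (h2 : Surjective F)
    (h3 : ∀ x, F (x + 1) = F x + 1) (x : ℝ) : ap (mk F h1 h2 h3) x = F x := rfl

lemma ext_ap {f g : HomeoZ} (h : ∀ x, ap f x = ap g x) : f = g :=
  Subtype.ext (Homeomorph.ext h)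

lemma surj_of_per {F : ℝ → ℝ} (hc : Continuous F) (h3 : ∀ x, F (x + 1) = F x + 1) :
    Surjective F := by
  intro y
  obtain ⟨n, hn⟩ := exists_int_lt (y - F 0)
  obtain ⟨m, hm⟩ := exists_int_gt (y - F 0)
  have hFn : F (0 + (n : ℝ)) = F 0 + n := per_int h3 0 n
  have hFm : F (0 + (m : ℝ)) = F 0 + m := per_int h3 0 m
  have hnm : ((n : ℝ)) ≤ ((m : ℝ)) := by linarith
  have hnm' : (0 + (n : ℝ)) ≤ (0 + (m : ℝ)) := by linarith
  have := intermediate_value_Icc hnm' hc.continuousOn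
  have hy : y ∈ Icc (F (0 + (n:ℝ))) (F (0 + (m:ℝ))) := by
    constructor
    · rw [hFn]; linarith
    · rw [hFm]; linarith
  obtain ⟨x, _, hx⟩ := this hy
  exact ⟨x, hx⟩


lemma cos_lip (a b : ℝ) : |Real.cos a - Real.cos b| ≤ |a - b| := by
  rw [Real.cos_sub_cos]
  have h1 : |Real.sin ((a + b) / 2)| ≤ 1 := Real.abs_sin_le_one _
  have h2 : |Real.sin ((a - b) / 2)| ≤ |(a - b) / 2| := Real.abs_sin_le_abs
  have h3 : |(a - b) / 2| = |a - b| / 2 := by rw [abs_div]; norm_num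
  rw [abs_mul, abs_mul]
  have h4 : |(-2 : ℝ)| = 2 := by norm_num
  rw [h4]
  nlinarith [abs_nonneg (Real.sin ((a + b) / 2)), abs_nonneg (Real.sin ((a - b) / 2)),
    abs_nonneg (a - b)]

noncomputable def bumpF (c s : ℝ) : ℝ → ℝ :=
  fun x => x + s * (1 - Real.cos (2 * π * (x - c))) / 2

lemma bumpF_mono (c s : ℝ) (hs : |s| ≤ 1 / 4) : StrictMono (bumpF c s) := by
  intro x y hxy
  unfold bumpF
  have hπ : π < 4 := by linarith [Real.pi_lt_d2]
  have hπ0 : 0 < π := Real.pi_pos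
  have hl := cos_lip (2 * π * (x - c)) (2 * π * (y - c))
  have he : |2 * π * (x - c) - 2 * π * (y - c)| = 2 * π * (y - x) := by
    rw [show 2 * π * (x - c) - 2 * π * (y - c) = -(2 * π * (y - x)) by ring, abs_neg,
      abs_of_nonneg (by nlinarith)]
  rw [he] at hl
  have key : |s * (Real.cos (2 * π * (x - c)) - Real.cos (2 * π * (y - c)))| ≤
      |s| * (2 * π * (y - x)) := by
    rw [abs_mul]
    exact mul_le_mul_of_nonneg_left hl (abs_nonneg s)
  have h5 : s * (Real.cos (2 * π * (x - c)) - Real.cos (2 * π * (y - c))) ≥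
      -(|s| * (2 * π * (y - x))) := by
    have := neg_abs_le (s * (Real.cos (2 * π * (x - c)) - Real.cos (2 * π * (y - c))))
    linarith
  have h6 : |s| * (2 * π * (y - x)) ≤ (1 / 4) * (2 * π * (y - x)) := by
    apply mul_le_mul_of_nonneg_right hs (by nlinarith)
  nlinarith

lemma bumpF_per (c s : ℝ) : ∀ x, bumpF c s (x + 1) = bumpF c s x + 1 := by
  intro x
  unfold bumpF
  rw [show 2 * π * (x + 1 - c) = 2 * π * (x - c) + 2 * π by ring, Real.cos_add_two_pi]
  ring

lemma bumpF_cont (c s : ℝ) : Continuous (bumpF c s) := by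
  unfold bumpF; fun_prop

noncomputable def bump (c s : ℝ) (hs : |s| ≤ 1 / 4) : HomeoZ :=
  mk (bumpF c s) (bumpF_mono c s hs) (surj_of_per (bumpF_cont c s) (bumpF_per c s))
    (bumpF_per c s)

lemma bump_fix (c s : ℝ) (hs : |s| ≤ 1 / 4) : ap (bump c s hs) c = c := by
  show bumpF c s c = c
  unfold bumpF
  rw [show 2 * π * (c - c) = 0 by ring, Real.cos_zero]
  ring

lemma bump_half (c s : ℝ) (hs : |s| ≤ 1 / 4) :
    ap (bump c s hs) (c + 1 / 2) = c + 1 / 2 + s := by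
  show bumpF c s (c + 1 / 2) = c + 1 / 2 + s
  unfold bumpF
  rw [show 2 * π * (c + 1 / 2 - c) = π by ring, Real.cos_pi]
  ring

lemma bump_gt (c : ℝ) {s : ℝ} (hs : |s| ≤ 1 / 4) (hs0 : 0 < s) {x : ℝ}
    (h1 : c < x) (h2 : x < c + 1) : x < ap (bump c s hs) x := by
  show x < bumpF c s x
  unfold bumpF
  have hπ : 0 < π := Real.pi_pos
  have hle : Real.cos (2 * π * (x - c)) ≤ 1 := Real.cos_le_one _
  have hiff := Real.cos_eq_one_iff_of_lt_of_lt (x := 2 * π * (x - c))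
    (by nlinarith) (by nlinarith)
  have hne : Real.cos (2 * π * (x - c)) ≠ 1 := fun h => by nlinarith [hiff.mp h]
  have : Real.cos (2 * π * (x - c)) < 1 := lt_of_le_of_ne hle hne
  nlinarith

noncomputable def transH (c : ℝ) : HomeoZ :=
  mk (fun x => x + c) (fun a b h => by dsimp; linarith)
    (fun y => ⟨y - c, by ring⟩) (fun x => by ring)

lemma ap_transH (c x : ℝ) : ap (transH c) x = x + c := rfl

lemma maxF_per (f g : HomeoZ) : ∀ x : ℝ,
    max (ap f (x + 1)) (ap g (x + 1)) = max (ap f x) (ap g x) + 1 := fun x => by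
  rw [ap_per f, ap_per g, max_add_add_right]

noncomputable def maxH (f g : HomeoZ) : HomeoZ :=
  mk (fun x => max (ap f x) (ap g x))
    (fun a b h => max_lt_max (ap_mono f h) (ap_mono g h))
    (surj_of_per ((ap_continuous f).max (ap_continuous g)) (maxF_per f g))
    (maxF_per f g)

lemma ap_maxH (f g : HomeoZ) (x : ℝ) : ap (maxH f g) x = max (ap f x) (ap g x) := rfl

/-! Fixed point lemmas -/

lemma fix_inv {x₀ : ℝ} {f : HomeoZ} (h : ap f x₀ = x₀) : ap f⁻¹ x₀ = x₀ := by
  conv_lhs => rw [← h, ap_inv_ap]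

lemma fix_lat {x₀ : ℝ} {f : HomeoZ} (h : ap f x₀ = x₀) (k : ℤ) :
    ap f (x₀ + k) = x₀ + k := by rw [ap_zper, h]

lemma fix_mapsIoo {x₀ : ℝ} {f : HomeoZ} (h : ap f x₀ = x₀) {x : ℝ}
    (h1 : x₀ < x) (h2 : x < x₀ + 1) : x₀ < ap f x ∧ ap f x < x₀ + 1 := by
  constructor
  · calc x₀ = ap f x₀ := h.symm
      _ < ap f x := ap_mono f h1
  · have h3 : ap f (x₀ + 1) = x₀ + 1 := by
      have := fix_lat h 1; push_cast at this; exact this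
    calc ap f x < ap f (x₀ + 1) := ap_mono f h2
      _ = x₀ + 1 := h3

lemma fix_zpow {x₀ : ℝ} {f : HomeoZ} (h : ap f x₀ = x₀) (n : ℤ) :
    ap (f ^ n) x₀ = x₀ := by
  induction n using Int.induction_on with
  | zero => rw [zpow_zero, ap_one]
  | succ n ih => rw [zpow_add_one, ap_mul, h, ih]
  | pred n ih => rw [zpow_sub_one, ap_mul, fix_inv h, ih]


/-! ### Nice maps and their orbit sequences -/

def Nice (x₀ : ℝ) (f : HomeoZ) : Prop :=
  ap f x₀ = x₀ ∧ ∀ x, x₀ < x → x < x₀ + 1 → ap f x < x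

noncomputable def seq (x₀ : ℝ) (γ : HomeoZ) (n : ℤ) : ℝ := ap (γ ^ n) (x₀ + 1 / 2)

lemma seq_zero (x₀ : ℝ) (γ : HomeoZ) : seq x₀ γ 0 = x₀ + 1 / 2 := by
  rw [seq, zpow_zero, ap_one]

lemma seq_shift (x₀ : ℝ) (γ : HomeoZ) (m n : ℤ) :
    ap (γ ^ m) (seq x₀ γ n) = seq x₀ γ (m + n) := by
  rw [seq, seq, zpow_add, ap_mul]

lemma seq_succ (x₀ : ℝ) (γ : HomeoZ) (n : ℤ) :
    seq x₀ γ (n + 1) = ap γ (seq x₀ γ n) := by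
  rw [show n + 1 = 1 + n by ring, ← seq_shift, zpow_one]

lemma seq_pred (x₀ : ℝ) (γ : HomeoZ) (n : ℤ) :
    seq x₀ γ (n - 1) = ap γ⁻¹ (seq x₀ γ n) := by
  rw [show n - 1 = (-1) + n by ring, ← seq_shift, zpow_neg_one]

lemma seq_mem {x₀ : ℝ} {γ : HomeoZ} (hγ : Nice x₀ γ) (n : ℤ) :
    x₀ < seq x₀ γ n ∧ seq x₀ γ n < x₀ + 1 := by
  induction n using Int.induction_on with
  | zero => rw [seq_zero]; constructor <;> norm_num
  | succ n ih => rw [seq_succ]; exact fix_mapsIoo hγ.1 ih.1 ih.2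
  | pred n ih =>
    rw [show (-(n : ℤ) - 1) = (-(n : ℤ)) - 1 by ring, seq_pred]
    exact fix_mapsIoo (fix_inv hγ.1) ih.1 ih.2

lemma seq_succ_lt {x₀ : ℝ} {γ : HomeoZ} (hγ : Nice x₀ γ) (n : ℤ) :
    seq x₀ γ (n + 1) < seq x₀ γ n := by
  rw [seq_succ]
  exact hγ.2 _ (seq_mem hγ n).1 (seq_mem hγ n).2

lemma seq_anti {x₀ : ℝ} {γ : HomeoZ} (hγ : Nice x₀ γ) :
    StrictAnti (seq x₀ γ) :=
  strictAnti_int_of_succ_lt (seq_succ_lt hγ)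

lemma seq_exists_lt {x₀ : ℝ} {γ : HomeoZ} (hγ : Nice x₀ γ) {x : ℝ} (hx : x₀ < x) :
    ∃ n : ℤ, seq x₀ γ n < x := by
  by_contra hcon
  push_neg at hcon
  set u : ℕ → ℝ := fun n => seq x₀ γ n with hu
  have hanti : Antitone u := fun a b hab => ((seq_anti hγ).antitone (by exact_mod_cast hab))
  have hbdd : BddBelow (range u) := ⟨x₀, by rintro _ ⟨n, rfl⟩; exact (seq_mem hγ n).1.le⟩
  have hlim := tendsto_atTop_ciInf hanti hbdd
  set L := ⨅ n, u n with hL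
  have hL1 : x ≤ L := le_ciInf fun n => hcon n
  have hγL : ap γ L = L := by
    have ht1 : Tendsto (fun n => ap γ (u n)) atTop (𝓝 (ap γ L)) :=
      ((ap_continuous γ).tendsto L).comp hlim
    have he : (fun n => ap γ (u n)) = fun n => u (n + 1) := by
      funext n
      show ap γ (seq x₀ γ n) = seq x₀ γ ((n : ℕ) + 1 : ℕ)
      rw [← seq_succ]
      norm_cast
    rw [he] at ht1
    have ht2 : Tendsto (fun n => u (n + 1)) atTop (𝓝 L) :=
      hlim.comp (tendsto_add_atTop_nat 1)
    exact tendsto_nhds_unique ht1 ht2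
  have hL2 : L ≤ u 0 := ciInf_le hbdd 0
  have hu0 : u 0 < x₀ + 1 := (seq_mem hγ 0).2
  have := hγ.2 L (lt_of_lt_of_le hx hL1) (lt_of_le_of_lt hL2 hu0)
  linarith [hγL]

lemma seq_exists_gt {x₀ : ℝ} {γ : HomeoZ} (hγ : Nice x₀ γ) {x : ℝ} (hx : x < x₀ + 1) :
    ∃ n : ℤ, x < seq x₀ γ n := by
  by_contra hcon
  push_neg at hcon
  set u : ℕ → ℝ := fun n => seq x₀ γ (-(n : ℤ)) with hu
  have hmono : Monotone u := fun a b hab =>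
    ((seq_anti hγ).antitone (by simp; exact_mod_cast hab))
  have hbdd : BddAbove (range u) := ⟨x₀ + 1, by rintro _ ⟨n, rfl⟩; exact (seq_mem hγ _).2.le⟩
  have hlim := tendsto_atTop_ciSup hmono hbdd
  set M := ⨆ n, u n with hM
  have hM1 : M ≤ x := ciSup_le fun n => hcon _
  have hγM : ap γ⁻¹ M = M := by
    have ht1 : Tendsto (fun n => ap γ⁻¹ (u n)) atTop (𝓝 (ap γ⁻¹ M)) :=
      ((ap_continuous γ⁻¹).tendsto M).comp hlim
    have he : (fun n => ap γ⁻¹ (u n)) = fun n => u (n + 1) := by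
      funext n
      show ap γ⁻¹ (seq x₀ γ (-(n : ℤ))) = seq x₀ γ (-((n : ℕ) + 1 : ℕ) : ℤ)
      rw [← seq_pred]
      congr 1
      push_cast
      ring
    rw [he] at ht1
    have ht2 : Tendsto (fun n => u (n + 1)) atTop (𝓝 M) :=
      hlim.comp (tendsto_add_atTop_nat 1)
    exact tendsto_nhds_unique ht1 ht2
  have hM2 : u 0 ≤ M := le_ciSup hbdd 0
  have hu0 : x₀ < u 0 := (seq_mem hγ _).1
  have hMx : x₀ < M := lt_of_lt_of_le hu0 hM2
  have hMlt : M < x₀ + 1 := lt_of_le_of_lt hM1 hx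
  have h1 := hγ.2 M hMx hMlt
  -- ap γ M < M, but also ap γ M = M from hγM
  have h2 : ap γ M = M := by
    conv_lhs => rw [← hγM, ap_ap_inv]
  linarith

lemma exists_dd {x₀ : ℝ} {γ : HomeoZ} (hγ : Nice x₀ γ) {x : ℝ}
    (h1 : x₀ < x) (h2 : x < x₀ + 1) :
    ∃ n : ℤ, seq x₀ γ (n + 1) ≤ x ∧ x < seq x₀ γ n := by
  obtain ⟨n₀, hn₀⟩ := seq_exists_lt hγ h1
  obtain ⟨m₀, hm₀⟩ := seq_exists_gt hγ h2
  obtain ⟨N, hN, hNmax⟩ := Int.exists_greatest_of_bdd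
    (P := fun n => x < seq x₀ γ n)
    ⟨n₀, fun z hz => by
      by_contra hzc
      push_neg at hzc
      have : seq x₀ γ z ≤ seq x₀ γ n₀ := (seq_anti hγ).antitone (le_of_lt hzc)
      linarith⟩
    ⟨m₀, hm₀⟩
  refine ⟨N, ?_, hN⟩
  by_contra hcon
  push_neg at hcon
  have := hNmax (N + 1) hcon
  omega

lemma dd_unique {x₀ : ℝ} {γ : HomeoZ} (hγ : Nice x₀ γ) {x : ℝ} {n m : ℤ}
    (ha : seq x₀ γ (n + 1) ≤ x) (hb : x < seq x₀ γ n)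
    (hc : seq x₀ γ (m + 1) ≤ x) (hd : x < seq x₀ γ m) : n = m := by
  by_contra hne
  rcases lt_or_gt_of_ne hne with h | h
  · have : seq x₀ γ m ≤ seq x₀ γ (n + 1) := (seq_anti hγ).antitone (by omega)
    linarith
  · have : seq x₀ γ n ≤ seq x₀ γ (m + 1) := (seq_anti hγ).antitone (by omega)
    linarith

open Classical in
noncomputable def dd (x₀ : ℝ) (γ : HomeoZ) (x : ℝ) : ℤ :=
  if h : Nice x₀ γ ∧ x₀ < x ∧ x < x₀ + 1 then
    Classical.choose (exists_dd h.1 h.2.1 h.2.2)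
  else 0

lemma dd_spec {x₀ : ℝ} {γ : HomeoZ} (hγ : Nice x₀ γ) {x : ℝ}
    (h1 : x₀ < x) (h2 : x < x₀ + 1) :
    seq x₀ γ (dd x₀ γ x + 1) ≤ x ∧ x < seq x₀ γ (dd x₀ γ x) := by
  classical
  rw [dd]
  rw [dif_pos ⟨hγ, h1, h2⟩]
  exact Classical.choose_spec (exists_dd hγ h1 h2)

lemma mem_of_seq_bounds {x₀ : ℝ} {γ : HomeoZ} (hγ : Nice x₀ γ) {x : ℝ} {n : ℤ}
    (ha : seq x₀ γ (n + 1) ≤ x) (hb : x < seq x₀ γ n) : x₀ < x ∧ x < x₀ + 1 :=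
  ⟨lt_of_lt_of_le (seq_mem hγ (n + 1)).1 ha, lt_trans hb (seq_mem hγ n).2⟩

lemma dd_eq {x₀ : ℝ} {γ : HomeoZ} (hγ : Nice x₀ γ) {x : ℝ} {n : ℤ}
    (ha : seq x₀ γ (n + 1) ≤ x) (hb : x < seq x₀ γ n) : dd x₀ γ x = n := by
  obtain ⟨h1, h2⟩ := mem_of_seq_bounds hγ ha hb
  obtain ⟨hc, hd⟩ := dd_spec hγ h1 h2
  exact dd_unique hγ hc hd ha hb


/-! ### The conjugating map -/

section Conj

variable {x₀ : ℝ} {α β : HomeoZ}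

/-- Affine map sending `[seq α 1, x₀+1/2]` to `[seq β 1, x₀+1/2]`. -/
noncomputable def ellF (x₀ : ℝ) (α β : HomeoZ) (t : ℝ) : ℝ :=
  seq x₀ β 1 + (t - seq x₀ α 1) *
    ((x₀ + 1 / 2 - seq x₀ β 1) / (x₀ + 1 / 2 - seq x₀ α 1))

lemma seq_one_lt {γ : HomeoZ} (hγ : Nice x₀ γ) : seq x₀ γ 1 < x₀ + 1 / 2 := by
  have := seq_succ_lt hγ 0
  rw [seq_zero] at this
  simpa using this

lemma ellF_a1 (hα : Nice x₀ α) : ellF x₀ α β (seq x₀ α 1) = seq x₀ β 1 := by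
  unfold ellF; ring

lemma ellF_p (hα : Nice x₀ α) : ellF x₀ α β (x₀ + 1 / 2) = x₀ + 1 / 2 := by
  have h := seq_one_lt hα
  have hne : x₀ + 1 / 2 - seq x₀ α 1 ≠ 0 := by linarith
  unfold ellF
  rw [mul_div_assoc', mul_comm, mul_div_assoc, div_self hne, mul_one]
  ring

lemma ellF_mono (hα : Nice x₀ α) (hβ : Nice x₀ β) : StrictMono (ellF x₀ α β) := by
  intro u v huv
  have h1 := seq_one_lt hα
  have h2 := seq_one_lt hβ
  unfold ellF
  have hr : 0 < (x₀ + 1 / 2 - seq x₀ β 1) / (x₀ + 1 / 2 - seq x₀ α 1) :=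
    div_pos (by linarith) (by linarith)
  nlinarith

lemma ellF_surj_on (hα : Nice x₀ α) (hβ : Nice x₀ β) {w : ℝ}
    (hw1 : seq x₀ β 1 ≤ w) (hw2 : w < x₀ + 1 / 2) :
    ∃ t, seq x₀ α 1 ≤ t ∧ t < x₀ + 1 / 2 ∧ ellF x₀ α β t = w := by
  have h1 := seq_one_lt hα
  have h2 := seq_one_lt hβ
  refine ⟨seq x₀ α 1 + (w - seq x₀ β 1) *
    ((x₀ + 1 / 2 - seq x₀ α 1) / (x₀ + 1 / 2 - seq x₀ β 1)), ?_, ?_, ?_⟩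
  · have hr : 0 ≤ (x₀ + 1 / 2 - seq x₀ α 1) / (x₀ + 1 / 2 - seq x₀ β 1) :=
      le_of_lt (div_pos (by linarith) (by linarith))
    nlinarith
  · have key : (w - seq x₀ β 1) * ((x₀ + 1 / 2 - seq x₀ α 1) / (x₀ + 1 / 2 - seq x₀ β 1))
        < x₀ + 1 / 2 - seq x₀ α 1 := by
      rw [div_eq_mul_inv, ← mul_assoc]
      rw [show (w - seq x₀ β 1) * (x₀ + 1 / 2 - seq x₀ α 1) =
        (x₀ + 1 / 2 - seq x₀ α 1) * (w - seq x₀ β 1) by ring]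
      rw [mul_assoc]
      have : (w - seq x₀ β 1) * (x₀ + 1 / 2 - seq x₀ β 1)⁻¹ < 1 := by
        rw [← div_eq_mul_inv, div_lt_one (by linarith)]
        linarith
      nlinarith
    linarith
  · have hne1 : x₀ + 1 / 2 - seq x₀ α 1 ≠ 0 := by linarith
    have hne2 : x₀ + 1 / 2 - seq x₀ β 1 ≠ 0 := by linarith
    unfold ellF
    rw [show seq x₀ α 1 + (w - seq x₀ β 1) *
        ((x₀ + 1 / 2 - seq x₀ α 1) / (x₀ + 1 / 2 - seq x₀ β 1)) - seq x₀ α 1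
        = (w - seq x₀ β 1) * ((x₀ + 1 / 2 - seq x₀ α 1) / (x₀ + 1 / 2 - seq x₀ β 1)) by ring]
    rw [mul_assoc, div_mul_div_comm, mul_comm (x₀ + 1 / 2 - seq x₀ α 1),
      div_self (mul_ne_zero hne2 hne1), mul_one]
    ring

/-- The conjugating map on the fundamental interval `(x₀, x₀+1)`. -/
noncomputable def c0 (x₀ : ℝ) (α β : HomeoZ) (x : ℝ) : ℝ :=
  ap (β ^ dd x₀ α x) (ellF x₀ α β (ap (α ^ (-(dd x₀ α x))) x))

lemma c0_bounds (hα : Nice x₀ α) (hβ : Nice x₀ β) {x : ℝ}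
    (h1 : x₀ < x) (h2 : x < x₀ + 1) :
    seq x₀ β (dd x₀ α x + 1) ≤ c0 x₀ α β x ∧ c0 x₀ α β x < seq x₀ β (dd x₀ α x) := by
  obtain ⟨ha, hb⟩ := dd_spec hα h1 h2
  set n := dd x₀ α x with hn
  -- t = ap (α^(-n)) x ∈ [seq α 1, p)
  have ht1 : seq x₀ α 1 ≤ ap (α ^ (-n)) x := by
    have := (ap_mono (α ^ (-n))).monotone ha
    rwa [seq_shift, show -n + (n + 1) = 1 by ring] at this
  have ht2 : ap (α ^ (-n)) x < x₀ + 1 / 2 := by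
    have := ap_mono (α ^ (-n)) hb
    rwa [seq_shift, show -n + n = 0 by ring, seq_zero] at this
  have hw1 : seq x₀ β 1 ≤ ellF x₀ α β (ap (α ^ (-n)) x) := by
    have := (ellF_mono hα hβ).monotone ht1
    rwa [ellF_a1 hα] at this
  have hw2 : ellF x₀ α β (ap (α ^ (-n)) x) < x₀ + 1 / 2 := by
    have := ellF_mono hα hβ ht2
    rwa [ellF_p hα] at this
  constructor
  · have := (ap_mono (β ^ n)).monotone hw1
    rwa [seq_shift, show n + 1 = n + 1 by ring] at this
  · have := ap_mono (β ^ n) hw2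
    rw [show x₀ + 1 / 2 = seq x₀ β 0 from (seq_zero x₀ β).symm, seq_shift,
      show n + 0 = n by ring] at this
    exact this

lemma c0_mem (hα : Nice x₀ α) (hβ : Nice x₀ β) {x : ℝ}
    (h1 : x₀ < x) (h2 : x < x₀ + 1) :
    x₀ < c0 x₀ α β x ∧ c0 x₀ α β x < x₀ + 1 := by
  obtain ⟨ha, hb⟩ := c0_bounds hα hβ h1 h2
  exact ⟨lt_of_lt_of_le (seq_mem hβ _).1 ha, lt_trans hb (seq_mem hβ _).2⟩

lemma c0_strictMonoOn (hα : Nice x₀ α) (hβ : Nice x₀ β) {x y : ℝ}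
    (hx1 : x₀ < x) (hx2 : x < x₀ + 1) (hy1 : x₀ < y) (hy2 : y < x₀ + 1)
    (hxy : x < y) : c0 x₀ α β x < c0 x₀ α β y := by
  obtain ⟨hax, hbx⟩ := dd_spec hα hx1 hx2
  obtain ⟨hay, hby⟩ := dd_spec hα hy1 hy2
  set n := dd x₀ α x with hn
  set m := dd x₀ α y with hm
  have hmn : m ≤ n := by
    by_contra hcon
    push_neg at hcon
    have : seq x₀ α m ≤ seq x₀ α (n + 1) := (seq_anti hα).antitone (by omega)
    linarith
  rcases eq_or_lt_of_le hmn with heq | hlt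
  · -- same interval
    have h1 : ap (α ^ (-n)) x < ap (α ^ (-n)) y := ap_mono _ hxy
    have h2 : ellF x₀ α β (ap (α ^ (-n)) x) < ellF x₀ α β (ap (α ^ (-n)) y) :=
      ellF_mono hα hβ h1
    have h3 := ap_mono (β ^ n) h2
    have ex : c0 x₀ α β x = ap (β ^ n) (ellF x₀ α β (ap (α ^ (-n)) x)) := by
      unfold c0; rw [← hn]
    have ey : c0 x₀ α β y = ap (β ^ m) (ellF x₀ α β (ap (α ^ (-m)) y)) := by
      unfold c0; rw [← hm]
    rw [ex, ey, heq]
    exact h3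
  · -- different intervals
    have hcx := (c0_bounds hα hβ hx1 hx2).2
    have hcy := (c0_bounds hα hβ hy1 hy2).1
    have : seq x₀ β n ≤ seq x₀ β (m + 1) := (seq_anti hβ).antitone (by omega)
    rw [← hn] at hcx
    rw [← hm] at hcy
    linarith

lemma c0_surjOn (hα : Nice x₀ α) (hβ : Nice x₀ β) {w : ℝ}
    (hw1 : x₀ < w) (hw2 : w < x₀ + 1) :
    ∃ x, x₀ < x ∧ x < x₀ + 1 ∧ c0 x₀ α β x = w := by
  obtain ⟨ha, hb⟩ := dd_spec hβ hw1 hw2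
  set m := dd x₀ β w with hm
  have hs1 : seq x₀ β 1 ≤ ap (β ^ (-m)) w := by
    have := (ap_mono (β ^ (-m))).monotone ha
    rwa [seq_shift, show -m + (m + 1) = 1 by ring] at this
  have hs2 : ap (β ^ (-m)) w < x₀ + 1 / 2 := by
    have := ap_mono (β ^ (-m)) hb
    rwa [seq_shift, show -m + m = 0 by ring, seq_zero] at this
  obtain ⟨t, ht1, ht2, ht3⟩ := ellF_surj_on hα hβ hs1 hs2
  refine ⟨ap (α ^ m) t, ?_, ?_, ?_⟩
  case _ =>
    have h1 : seq x₀ α (m + 1) ≤ ap (α ^ m) t := by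
      have := (ap_mono (α ^ m)).monotone ht1
      rwa [seq_shift] at this
    exact lt_of_lt_of_le (seq_mem hα (m + 1)).1 h1
  case _ =>
    have h2 : ap (α ^ m) t < seq x₀ α m := by
      have := ap_mono (α ^ m) ht2
      rwa [show x₀ + 1 / 2 = seq x₀ α 0 from (seq_zero x₀ α).symm, seq_shift,
        show m + 0 = m by ring] at this
    exact lt_trans h2 (seq_mem hα m).2
  case _ =>
    have hdd : dd x₀ α (ap (α ^ m) t) = m := by
      apply dd_eq hα
      · have := (ap_mono (α ^ m)).monotone ht1
        rwa [seq_shift] at this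
      · have := ap_mono (α ^ m) ht2
        rwa [show x₀ + 1 / 2 = seq x₀ α 0 from (seq_zero x₀ α).symm, seq_shift,
          show m + 0 = m by ring] at this
    unfold c0
    rw [hdd]
    have hback : ap (α ^ (-m)) (ap (α ^ m) t) = t := by
      rw [← ap_mul, ← zpow_add, show -m + m = 0 by ring, zpow_zero, ap_one]
    rw [hback, ht3, ← ap_mul, ← zpow_add, show m + -m = 0 by ring, zpow_zero, ap_one]

lemma c0_conj (hα : Nice x₀ α) (hβ : Nice x₀ β) {x : ℝ}
    (h1 : x₀ < x) (h2 : x < x₀ + 1) :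
    c0 x₀ α β (ap α x) = ap β (c0 x₀ α β x) := by
  obtain ⟨ha, hb⟩ := dd_spec hα h1 h2
  set n := dd x₀ α x with hn
  have hax : seq x₀ α ((n + 1) + 1) ≤ ap α x := by
    have e := seq_shift x₀ α 1 (n + 1)
    rw [zpow_one] at e
    have h := (ap_mono α).monotone ha
    rw [e, show 1 + (n + 1) = (n + 1) + 1 by ring] at h
    exact h
  have hbx : ap α x < seq x₀ α (n + 1) := by
    have e := seq_shift x₀ α 1 n
    rw [zpow_one] at e
    have h := ap_mono α hb
    rw [e, show 1 + n = n + 1 by ring] at h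
    exact h
  have hdd2 : dd x₀ α (ap α x) = n + 1 := dd_eq hα hax hbx
  have ex : c0 x₀ α β x = ap (β ^ n) (ellF x₀ α β (ap (α ^ (-n)) x)) := by
    unfold c0; rw [← hn]
  have ey : c0 x₀ α β (ap α x) =
      ap (β ^ (n + 1)) (ellF x₀ α β (ap (α ^ (-(n + 1))) (ap α x))) := by
    unfold c0; rw [hdd2]
  have harg : ap (α ^ (-(n + 1))) (ap α x) = ap (α ^ (-n)) x := by
    rw [← ap_mul, ← zpow_add_one, show -(n + 1) + 1 = -n by ring]
  rw [ey, harg, ex, show (n + 1 : ℤ) = 1 + n by ring, zpow_add, ap_mul, zpow_one]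


/-- The global conjugating map. -/
noncomputable def CC (x₀ : ℝ) (α β : HomeoZ) (x : ℝ) : ℝ :=
  if x - x₀ = ⌊x - x₀⌋ then x else c0 x₀ α β (x - ⌊x - x₀⌋) + ⌊x - x₀⌋

lemma frac_bounds {x : ℝ} (h : ¬ (x - x₀ = ⌊x - x₀⌋)) :
    x₀ < x - ⌊x - x₀⌋ ∧ x - ⌊x - x₀⌋ < x₀ + 1 := by
  have h1 : (⌊x - x₀⌋ : ℝ) ≤ x - x₀ := Int.floor_le _
  have h2 : x - x₀ < ⌊x - x₀⌋ + 1 := Int.lt_floor_add_one _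
  constructor
  · rcases lt_or_eq_of_le h1 with h3 | h3
    · linarith
    · exact absurd h3.symm h
  · linarith

lemma CC_bounds (hα : Nice x₀ α) (hβ : Nice x₀ β) (x : ℝ) :
    x₀ + ⌊x - x₀⌋ ≤ CC x₀ α β x ∧ CC x₀ α β x < x₀ + ⌊x - x₀⌋ + 1 := by
  unfold CC
  by_cases h : x - x₀ = ⌊x - x₀⌋
  · rw [if_pos h]
    constructor
    · linarith [h.ge]
    · linarith [h.le]
  · rw [if_neg h]
    obtain ⟨h1, h2⟩ := frac_bounds h
    obtain ⟨h3, h4⟩ := c0_mem hα hβ h1 h2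
    constructor <;> linarith

lemma CC_mono (hα : Nice x₀ α) (hβ : Nice x₀ β) : StrictMono (CC x₀ α β) := by
  intro x y hxy
  have hk : ⌊x - x₀⌋ ≤ ⌊y - x₀⌋ := Int.floor_le_floor (by linarith)
  rcases eq_or_lt_of_le hk with heq | hlt
  · -- same fundamental interval
    unfold CC
    by_cases h1 : x - x₀ = ⌊x - x₀⌋
    · by_cases h2 : y - x₀ = ⌊y - x₀⌋
      · rw [if_pos h1, if_pos h2]; exact hxy
      · rw [if_pos h1, if_neg h2]
        obtain ⟨ha, hb⟩ := frac_bounds h2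
        have := (c0_mem hα hβ ha hb).1
        have hx : x = x₀ + ⌊x - x₀⌋ := by linarith [h1]
        rw [hx, heq]
        linarith
    · by_cases h2 : y - x₀ = ⌊y - x₀⌋
      · -- x non-lattice, y lattice with same floor: impossible
        exfalso
        have h1' : (⌊x - x₀⌋ : ℝ) ≤ x - x₀ := Int.floor_le _
        rcases lt_or_eq_of_le h1' with h3 | h3
        · -- x > x₀ + ⌊⌋, y = x₀ + ⌊y-x₀⌋ = x₀ + ⌊x-x₀⌋ ≤ x, contradicting x < y
          have : y = x₀ + (⌊y - x₀⌋ : ℝ) := by linarith [h2]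
          rw [← heq] at this
          linarith
        · exact h1 h3.symm
      · rw [if_neg h1, if_neg h2]
        obtain ⟨ha, hb⟩ := frac_bounds h1
        obtain ⟨hc, hd⟩ := frac_bounds h2
        rw [← heq] at hc hd ⊢
        have hlt2 : x - (⌊x - x₀⌋ : ℝ) < y - (⌊x - x₀⌋ : ℝ) := by linarith
        have := c0_strictMonoOn hα hβ ha hb hc hd hlt2
        linarith
  · -- different fundamental intervals
    have b1 := (CC_bounds hα hβ x).2
    have b2 := (CC_bounds hα hβ y).1
    have : (⌊x - x₀⌋ : ℝ) + 1 ≤ (⌊y - x₀⌋ : ℝ) := by exact_mod_cast hlt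
    linarith


lemma CC_per (x₀ : ℝ) (α β : HomeoZ) : ∀ x, CC x₀ α β (x + 1) = CC x₀ α β x + 1 := by
  intro x
  unfold CC
  have hfl : ⌊x + 1 - x₀⌋ = ⌊x - x₀⌋ + 1 := by
    rw [show x + 1 - x₀ = (x - x₀) + 1 by ring, Int.floor_add_one]
  have hcond : (x + 1 - x₀ = ⌊x + 1 - x₀⌋) ↔ (x - x₀ = ⌊x - x₀⌋) := by
    rw [hfl]; push_cast; constructor <;> intro h <;> linarith
  by_cases h : x - x₀ = ⌊x - x₀⌋
  · rw [if_pos h, if_pos (hcond.mpr h)]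
  · rw [if_neg h, if_neg (fun hc => h (hcond.mp hc)), hfl]
    push_cast
    rw [show x + 1 - ((⌊x - x₀⌋ : ℝ) + 1) = x - ⌊x - x₀⌋ by ring]
    ring

lemma CC_surj (hα : Nice x₀ α) (hβ : Nice x₀ β) : Function.Surjective (CC x₀ α β) := by
  intro w
  by_cases h : w - x₀ = ⌊w - x₀⌋
  · exact ⟨w, by rw [CC, if_pos h]⟩
  · obtain ⟨hw1, hw2⟩ := frac_bounds h
    obtain ⟨x', hx1, hx2, hx3⟩ := c0_surjOn hα hβ hw1 hw2
    refine ⟨x' + ⌊w - x₀⌋, ?_⟩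
    have hfl : ⌊x' + (⌊w - x₀⌋ : ℝ) - x₀⌋ = ⌊w - x₀⌋ := by
      rw [show x' + (⌊w - x₀⌋ : ℝ) - x₀ = (x' - x₀) + ⌊w - x₀⌋ by ring, Int.floor_add_intCast]
      have hz : ⌊x' - x₀⌋ = 0 := by
        rw [Int.floor_eq_zero_iff]
        exact Set.mem_Ico.mpr ⟨by linarith, by linarith⟩
      omega
    have hnl : ¬ (x' + (⌊w - x₀⌋ : ℝ) - x₀ = ⌊x' + (⌊w - x₀⌋ : ℝ) - x₀⌋) := by
      rw [hfl]
      intro hc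
      have : x' = x₀ := by linarith
      linarith
    rw [CC, if_neg hnl, hfl]
    rw [show x' + (⌊w - x₀⌋ : ℝ) - ⌊w - x₀⌋ = x' by ring, hx3]
    linarith

lemma CC_conj (hα : Nice x₀ α) (hβ : Nice x₀ β) (x : ℝ) :
    CC x₀ α β (ap α x) = ap β (CC x₀ α β x) := by
  by_cases h : x - x₀ = ⌊x - x₀⌋
  · -- lattice point: everything is fixed
    have hx : x = x₀ + (⌊x - x₀⌋ : ℝ) := by linarith
    have hαx : ap α x = x := by rw [hx]; exact fix_lat hα.1 _
    have hβx : ap β x = x := by rw [hx]; exact fix_lat hβ.1 _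
    rw [hαx, CC, if_pos h, hβx]
  · obtain ⟨h1, h2⟩ := frac_bounds h
    set k := ⌊x - x₀⌋ with hk
    set y := x - (k : ℝ) with hy
    -- ap α x = ap α y + k
    have hax : ap α x = ap α y + k := by
      have h0 := ap_zper α y k
      rw [show y + (k : ℝ) = x from by rw [hy]; ring] at h0
      exact h0
    have hαy := fix_mapsIoo hα.1 h1 h2
    have hfl2 : ⌊ap α x - x₀⌋ = k := by
      rw [hax, show ap α y + (k : ℝ) - x₀ = (ap α y - x₀) + k by ring, Int.floor_add_intCast]
      have : ⌊ap α y - x₀⌋ = 0 := by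
        rw [Int.floor_eq_zero_iff]
        exact Set.mem_Ico.mpr ⟨by linarith [hαy.1], by linarith [hαy.2]⟩
      omega
    have hnl2 : ¬ (ap α x - x₀ = ⌊ap α x - x₀⌋) := by
      rw [hfl2, hax]
      intro hc
      have : ap α y = x₀ := by linarith
      linarith [hαy.1]
    rw [CC, CC, if_neg hnl2, if_neg h, hfl2, ← hk]
    rw [show ap α x - (k : ℝ) = ap α y from by rw [hax]; ring]
    rw [c0_conj hα hβ h1 h2]
    rw [ap_zper β _ k]

/-- From two `Nice` maps we can build the conjugator inside `HomeoZ`. -/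
lemma conj_exists (hα : Nice x₀ α) (hβ : Nice x₀ β) :
    ∃ c : HomeoZ, β = c * α * c⁻¹ := by
  refine ⟨mk (CC x₀ α β) (CC_mono hα hβ) (CC_surj hα hβ) (CC_per x₀ α β), ?_⟩
  set c := mk (CC x₀ α β) (CC_mono hα hβ) (CC_surj hα hβ) (CC_per x₀ α β) with hc
  apply ext_ap
  intro x
  rw [ap_mul, ap_mul]
  have h1 : ap c (ap α (ap c⁻¹ x)) = ap β (ap c (ap c⁻¹ x)) := CC_conj hα hβ (ap c⁻¹ x)
  rw [h1, ap_ap_inv]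

end Conj

/-! ### Every element with a fixed point is a commutator -/

lemma quarter_abs : |(1 / 4 : ℝ)| ≤ 1 / 4 := by rw [abs_of_nonneg] <;> norm_num

lemma fix_comm (g : HomeoZ) (x₀ : ℝ) (hx : ap g x₀ = x₀) :
    ∃ u c : HomeoZ, g = ⁅u, c⁆ := by
  set τ := bump x₀ (1 / 4) quarter_abs with hτ
  set gp := maxH g 1 with hgp
  set u := gp * τ with hu
  set v := u⁻¹ * g with hv
  have hgpap : ∀ x, ap gp x = max (ap g x) x := fun x => ap_maxH g 1 x
  have hτfix : ap τ x₀ = x₀ := bump_fix x₀ (1 / 4) quarter_abs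
  have hτgt : ∀ x, x₀ < x → x < x₀ + 1 → x < ap τ x := fun x h1 h2 =>
    bump_gt x₀ quarter_abs (by norm_num) h1 h2
  have hufix : ap u x₀ = x₀ := by
    rw [hu, ap_mul, hτfix, hgpap, hx, max_self]
  have hugt : ∀ x, x₀ < x → x < x₀ + 1 → x < ap u x := by
    intro x h1 h2
    rw [hu, ap_mul, hgpap]
    calc x < ap τ x := hτgt x h1 h2
      _ ≤ max (ap g (ap τ x)) (ap τ x) := le_max_right _ _
  have huinv : Nice x₀ u⁻¹ := by
    refine ⟨fix_inv hufix, ?_⟩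
    intro x h1 h2
    obtain ⟨hz1, hz2⟩ := fix_mapsIoo (fix_inv hufix) h1 h2
    have := hugt _ hz1 hz2
    rwa [ap_ap_inv] at this
  have hvnice : Nice x₀ v := by
    constructor
    · rw [hv, ap_mul, hx, fix_inv hufix]
    · intro x h1 h2
      rw [hv, ap_mul]
      have hgx : ap g x ≤ ap gp x := by rw [hgpap]; exact le_max_left _ _
      have step1 : ap u⁻¹ (ap g x) ≤ ap u⁻¹ (ap gp x) := (ap_mono u⁻¹).monotone hgx
      have step2 : ap u⁻¹ (ap gp x) = ap τ⁻¹ x := by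
        rw [hu, mul_inv_rev, ap_mul]
        congr 1
        rw [ap_inv_ap]
      have hτinvfix : ap τ⁻¹ x₀ = x₀ := fix_inv hτfix
      obtain ⟨hz1, hz2⟩ := fix_mapsIoo hτinvfix h1 h2
      have step3 : ap τ⁻¹ x < x := by
        have := hτgt _ hz1 hz2
        rwa [ap_ap_inv] at this
      calc ap u⁻¹ (ap g x) ≤ ap τ⁻¹ x := step1.trans_eq step2
        _ < x := step3
  obtain ⟨c, hc⟩ := conj_exists huinv hvnice
  refine ⟨u, c, ?_⟩
  have hg : g = u * v := by rw [hv, ← mul_assoc, mul_inv_cancel, one_mul]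
  rw [hg, hc, commutatorElement_def]
  group

/-! ### Assembly -/

lemma comm_mem (u c : HomeoZ) : ⁅u, c⁆ ∈ commutator HomeoZ :=
  Subgroup.commutator_mem_commutator (Subgroup.mem_top u) (Subgroup.mem_top c)

lemma mem_of_fix (g : HomeoZ) (x₀ : ℝ) (hx : ap g x₀ = x₀) :
    g ∈ commutator HomeoZ := by
  obtain ⟨u, c, hg⟩ := fix_comm g x₀ hx
  rw [hg]
  exact comm_mem u c

lemma transH_mul (a b : ℝ) : transH a * transH b = transH (a + b) :=
  ext_ap fun x => by rw [ap_mul, ap_transH, ap_transH, ap_transH]; ring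

lemma transH_pow (s : ℝ) (n : ℕ) : (transH s) ^ n = transH (n * s) := by
  induction n with
  | zero =>
    apply ext_ap
    intro x
    rw [pow_zero, ap_one, ap_transH]
    push_cast
    ring
  | succ n ih =>
    rw [pow_succ, ih, transH_mul]
    congr 1
    push_cast
    ring

lemma transH_small_mem {s : ℝ} (hs : |s| ≤ 1 / 4) : transH s ∈ commutator HomeoZ := by
  set b := bump (-(1 / 2)) s hs with hb
  set a := transH s * b⁻¹ with ha
  have hbfix : ap b (-(1 / 2)) = -(1 / 2) := bump_fix _ s hs
  have hb0 : ap b 0 = s := by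
    have := bump_half (-(1 / 2)) s hs
    rw [show -(1 / 2 : ℝ) + 1 / 2 = 0 by ring] at this
    rw [this]; ring
  have hafix : ap a s = s := by
    rw [ha, ap_mul]
    have : ap b⁻¹ s = 0 := by rw [← hb0, ap_inv_ap]
    rw [this, ap_transH]; ring
  have hab : transH s = a * b := by rw [ha, inv_mul_cancel_right]
  rw [hab]
  exact mul_mem (mem_of_fix a s hafix) (mem_of_fix b (-(1 / 2)) hbfix)

lemma transH_mem (c : ℝ) : transH c ∈ commutator HomeoZ := by
  set n : ℕ := 4 * ⌈|c|⌉₊ + 4 with hn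
  have hn0 : 0 < (n : ℝ) := by positivity
  have hcn : |c / n| ≤ 1 / 4 := by
    rw [abs_div, abs_of_nonneg hn0.le, div_le_div_iff₀ hn0 (by norm_num)]
    have h1 : |c| ≤ ⌈|c|⌉₊ := Nat.le_ceil _
    have h2 : (4 : ℝ) * ⌈|c|⌉₊ + 4 = (n : ℝ) := by rw [hn]; push_cast; ring
    nlinarith
  have heq : transH c = (transH (c / n)) ^ n := by
    rw [transH_pow]
    congr 1
    field_simp
  rw [heq]
  exact pow_mem (transH_small_mem hcn) n

lemma mem_comm_all (f : HomeoZ) : f ∈ commutator HomeoZ := by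
  have hgfix : ap ((transH (ap f 0))⁻¹ * f) 0 = 0 := by
    rw [ap_mul]
    have h1 : ap (transH (ap f 0)) 0 = ap f 0 := by rw [ap_transH]; ring
    calc ap (transH (ap f 0))⁻¹ (ap f 0)
        = ap (transH (ap f 0))⁻¹ (ap (transH (ap f 0)) 0) := by rw [h1]
      _ = 0 := ap_inv_ap _ 0
  have hf : f = transH (ap f 0) * ((transH (ap f 0))⁻¹ * f) := by
    rw [← mul_assoc, mul_inv_cancel, one_mul]
  rw [hf]
  exact mul_mem (transH_mem (ap f 0)) (mem_of_fix _ 0 hgfix)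

end HZaux

/-- Every group morphism `Homeo_ℤ(ℝ) → ℤ` is trivial; equivalently, every element of
`Homeo_ℤ(ℝ)` is a product of commutators (the commutator subgroup is everything). -/
theorem stmt_14 :
    (∀ φ : HomeoZ →* Multiplicative ℤ, ∀ f : HomeoZ, φ f = 1) ∧
      commutator HomeoZ = ⊤ := by
  have hcomm : commutator HomeoZ = ⊤ := by
    rw [Subgroup.eq_top_iff']
    exact HZaux.mem_comm_all
  refine ⟨?_, hcomm⟩
  intro φ f
  have h1 : commutator HomeoZ ≤ φ.ker := Abelianization.commutator_subset_ker φ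
  have h2 : f ∈ φ.ker := h1 (hcomm ▸ Subgroup.mem_top f)
  exact h2
end

section
/- Let ψ : Homeo_ℤ(ℝ) → Homeo₊(ℝ) be a group homomorphism and let t ∈ Homeo_ℤ(ℝ) be the translation x ↦ x+1 (a generator of the center of Homeo_ℤ(ℝ)). Then every connected component of ℝ \ Fix(ψ(t)) is preserved (setwise) by ψ(f) for all f ∈ Homeo_ℤ(ℝ), and Fix(ψ(Homeo_ℤ(ℝ))) = Fix(ψ(t)). -/
/-- `Homeo₊(ℝ)`: the group of orientation-preserving (strictly increasing)
homeomorphisms of `ℝ`. -/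
def HomeoPlus : Subgroup (ℝ ≃ₜ ℝ) where
  carrier := {f | StrictMono f}
  one_mem' := strictMono_id
  mul_mem' := fun hf hg => hf.comp hg
  inv_mem' := by
    intro f hf a b hab
    show f.symm a < f.symm b
    rw [← hf.lt_iff_lt, f.apply_symm_apply, f.apply_symm_apply]
    exact hab

/-- The translation `x ↦ x + 1`, as an element of `Homeo_ℤ(ℝ)` (a generator of its
center). -/
def tOne : HomeoZ :=
  ⟨Homeomorph.addRight (1 : ℝ), fun x => rfl⟩
namespace S16

open Set

/-! ### Basic apply lemmas for the group `ℝ ≃ₜ ℝ` -/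

lemma mul_ap (f g : ℝ ≃ₜ ℝ) (x : ℝ) : (f * g) x = f (g x) := rfl

lemma one_ap (x : ℝ) : (1 : ℝ ≃ₜ ℝ) x = x := rfl

lemma inv_ap (f : ℝ ≃ₜ ℝ) (x : ℝ) : (f⁻¹) x = f.symm x := rfl

lemma zpow_ap_zpow (f : ℝ ≃ₜ ℝ) (m n : ℤ) (x : ℝ) :
    (f ^ m) ((f ^ n) x) = (f ^ (m + n)) x := by
  rw [zpow_add]; rfl

lemma zpow_one_ap (f : ℝ ≃ₜ ℝ) (x : ℝ) : (f ^ (1 : ℤ)) x = f x := by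
  rw [zpow_one]

lemma zpow_zero_ap (f : ℝ ≃ₜ ℝ) (x : ℝ) : (f ^ (0 : ℤ)) x = x := by
  rw [zpow_zero]; rfl

/-- The inverse of a strictly monotone homeomorphism is strictly monotone. -/
lemma symm_strictMono {f : ℝ ≃ₜ ℝ} (hf : StrictMono f) : StrictMono f.symm := by
  intro a b hab
  rw [← hf.lt_iff_lt, f.apply_symm_apply, f.apply_symm_apply]
  exact hab

lemma strictMono_zpow {f : ℝ ≃ₜ ℝ} (hf : StrictMono f) (n : ℤ) :
    StrictMono ⇑(f ^ n) := by
  induction n using Int.induction_on with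
  | zero => rw [zpow_zero]; exact strictMono_id
  | succ k ih =>
      have : (f ^ ((k : ℤ) + 1)) = f ^ (k : ℤ) * f := by rw [zpow_add, zpow_one]
      rw [this]
      exact fun a b hab => ih (hf hab)
  | pred k ih =>
      have : (f ^ (-(k : ℤ) - 1)) = f ^ (-(k : ℤ)) * f⁻¹ := by
        rw [zpow_sub, zpow_one]
      rw [this]
      exact fun a b hab => ih (symm_strictMono hf hab)

/-! ### `CommZ` : commuting with integer translations -/

def CommZ (f : ℝ → ℝ) : Prop := ∀ x, f (x + 1) = f x + 1

lemma CommZ.comp {f g : ℝ → ℝ} (hf : CommZ f) (hg : CommZ g) : CommZ (f ∘ g) := by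
  intro x; simp only [Function.comp_apply, hg x, hf (g x)]

lemma CommZ.int {f : ℝ → ℝ} (hf : CommZ f) (x : ℝ) (n : ℤ) :
    f (x + n) = f x + n := by
  induction n using Int.induction_on with
  | zero => simp
  | succ k ih =>
      push_cast at ih ⊢
      have h3 : x + ((k:ℝ) + 1) = (x + k) + 1 := by ring
      rw [h3, hf, ih]; ring
  | pred k ih =>
      push_cast at ih ⊢
      have h2 := hf (x + (-(k:ℝ) - 1))
      have h3 : x + (-(k:ℝ) - 1) + 1 = x + -(k:ℝ) := by ring
      rw [h3, ih] at h2
      linarith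

/-- Members of `HomeoZ` commute with integer translations. -/
lemma memZ (f : HomeoZ) : CommZ ⇑(f : ℝ ≃ₜ ℝ) := f.2

lemma memZ_int (f : HomeoZ) (x : ℝ) (n : ℤ) :
    (f : ℝ ≃ₜ ℝ) (x + n) = (f : ℝ ≃ₜ ℝ) x + n := (memZ f).int x n

/-- Every element of `HomeoZ` is strictly monotone. -/
lemma zStrictMono (f : HomeoZ) : StrictMono ⇑(f : ℝ ≃ₜ ℝ) := by
  rcases Continuous.strictMono_of_inj (f : ℝ ≃ₜ ℝ).continuous
      (f : ℝ ≃ₜ ℝ).injective with h | h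
  · exact h
  · exfalso
    have h1 : (f : ℝ ≃ₜ ℝ) 1 < (f : ℝ ≃ₜ ℝ) 0 := h one_pos
    have h2 : (f : ℝ ≃ₜ ℝ) (0 + 1) = (f : ℝ ≃ₜ ℝ) 0 + 1 := memZ f 0
    rw [zero_add] at h2
    linarith

/-- Coercion lemmas for `HomeoZ`. -/
lemma coe_mul (f g : HomeoZ) : ((f * g : HomeoZ) : ℝ ≃ₜ ℝ) = (f : ℝ ≃ₜ ℝ) * g := rfl

lemma coe_inv (f : HomeoZ) : ((f⁻¹ : HomeoZ) : ℝ ≃ₜ ℝ) = (f : ℝ ≃ₜ ℝ)⁻¹ := rfl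

lemma mul_apz (f g : HomeoZ) (x : ℝ) :
    ((f * g : HomeoZ) : ℝ ≃ₜ ℝ) x = (f : ℝ ≃ₜ ℝ) ((g : ℝ ≃ₜ ℝ) x) := rfl

lemma inv_apz (f : HomeoZ) (x : ℝ) :
    ((f⁻¹ : HomeoZ) : ℝ ≃ₜ ℝ) x = (f : ℝ ≃ₜ ℝ).symm x := rfl

lemma ext_z {f g : HomeoZ} (h : ∀ x, (f : ℝ ≃ₜ ℝ) x = (g : ℝ ≃ₜ ℝ) x) : f = g :=
  Subtype.ext (Homeomorph.ext h)

/-- Two elements of `HomeoZ` agreeing on `[0,1)` are equal. -/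
lemma ext_z_Ico {f g : HomeoZ}
    (h : ∀ x ∈ Ico (0:ℝ) 1, (f : ℝ ≃ₜ ℝ) x = (g : ℝ ≃ₜ ℝ) x) : f = g := by
  apply ext_z
  intro x
  have hx : x = Int.fract x + (⌊x⌋ : ℤ) := by
    rw [Int.fract]; push_cast; ring
  rw [hx, memZ_int f, memZ_int g,
    h _ ⟨Int.fract_nonneg x, Int.fract_lt_one x⟩]

/-! ### `tOne` basics -/

lemma tOne_ap (x : ℝ) : ((tOne : HomeoZ) : ℝ ≃ₜ ℝ) x = x + 1 := rfl

lemma symm_ap_eq (f : ℝ ≃ₜ ℝ) {x y : ℝ} : f.symm x = y ↔ x = f y := by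
  constructor
  · rintro rfl; rw [f.apply_symm_apply]
  · rintro rfl; rw [f.symm_apply_apply]

lemma tOne_zpow_ap (k : ℤ) (x : ℝ) :
    ((tOne ^ k : HomeoZ) : ℝ ≃ₜ ℝ) x = x + k := by
  have key : ∀ (n : ℤ) (y : ℝ), ((tOne ^ n : HomeoZ) : ℝ ≃ₜ ℝ) y = y + n := by
    intro n
    induction n using Int.induction_on with
    | zero => intro y; simp [zpow_zero]
    | succ n ih =>
        intro y
        have h3 : (tOne ^ ((n : ℤ) + 1) : HomeoZ) = tOne ^ (n : ℤ) * tOne := by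
          rw [zpow_add, zpow_one]
        rw [h3, mul_apz, tOne_ap, ih]
        push_cast; ring
    | pred n ih =>
        intro y
        have h3 : (tOne ^ (-(n : ℤ) - 1) : HomeoZ) = tOne ^ (-(n : ℤ)) * tOne⁻¹ := by
          rw [zpow_sub, zpow_one]
        rw [h3, mul_apz, inv_apz]
        have ht : ((tOne : HomeoZ) : ℝ ≃ₜ ℝ).symm y = y - 1 := by
          rw [symm_ap_eq, tOne_ap]; ring
        rw [ht, ih]
        push_cast; ring
  exact key k x

/-- `tOne` is central in `HomeoZ`. -/
lemma tOne_central (f : HomeoZ) : f * tOne = tOne * f := by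
  apply ext_z
  intro x
  rw [mul_apz, mul_apz, tOne_ap, tOne_ap]
  exact memZ f x

lemma tOne_zpow_central (f : HomeoZ) (m : ℤ) : f * tOne ^ m = tOne ^ m * f := by
  have h : Commute tOne f := by
    unfold Commute SemiconjBy
    rw [← tOne_central]
  exact (h.zpow_left m).symm

lemma conj_tOne_zpow (p : HomeoZ) (m : ℤ) : p⁻¹ * tOne ^ m * p = tOne ^ m := by
  rw [mul_assoc, ← tOne_zpow_central, ← mul_assoc, inv_mul_cancel, one_mul]

end S16
namespace S16

open Set

/-! ### Builders -/

noncomputable def mkZ (f : ℝ → ℝ) (hm : StrictMono f) (hs : Function.Surjective f)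
    (hc : CommZ f) : HomeoZ :=
  ⟨(StrictMono.orderIsoOfSurjective f hm hs).toHomeomorph, fun x => hc x⟩

lemma mkZ_ap (f : ℝ → ℝ) (hm : StrictMono f) (hs : Function.Surjective f)
    (hc : CommZ f) (x : ℝ) : ((mkZ f hm hs hc : HomeoZ) : ℝ ≃ₜ ℝ) x = f x := rfl

/-- Periodization of a function on `[0,1]`. -/
noncomputable def perFun (f₀ : ℝ → ℝ) : ℝ → ℝ := fun x => f₀ (Int.fract x) + ⌊x⌋

lemma perFun_commZ (f₀ : ℝ → ℝ) : CommZ (perFun f₀) := by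
  intro x
  unfold perFun
  have h1 : x + 1 = x + ((1:ℤ):ℝ) := by norm_num
  rw [h1, Int.fract_add_intCast, Int.floor_add_intCast]
  push_cast; ring

section perFun
variable {f₀ : ℝ → ℝ}

lemma fract_mem_Icc (x : ℝ) : Int.fract x ∈ Icc (0:ℝ) 1 :=
  ⟨Int.fract_nonneg x, (Int.fract_lt_one x).le⟩

lemma perFun_strictMono (hm : StrictMonoOn f₀ (Icc 0 1)) (h01 : f₀ 1 = f₀ 0 + 1) :
    StrictMono (perFun f₀) := by
  intro x y hxy
  unfold perFun
  have hfx1 := Int.fract_lt_one x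
  have hfy := Int.fract_nonneg y
  rcases eq_or_lt_of_le (Int.floor_le_floor hxy.le) with hf | hf
  · have hfc : ((⌊x⌋ : ℤ) : ℝ) = ((⌊y⌋ : ℤ) : ℝ) := by rw [hf]
    have hfr : Int.fract x < Int.fract y := by
      unfold Int.fract; rw [← hfc] at *; linarith
    have := hm (fract_mem_Icc x) (fract_mem_Icc y) hfr
    linarith
  · have h2 : f₀ (Int.fract x) < f₀ 1 :=
      hm (fract_mem_Icc x) ⟨zero_le_one, le_refl 1⟩ hfx1
    have h3 : f₀ 0 ≤ f₀ (Int.fract y) :=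
      hm.monotoneOn ⟨le_refl 0, zero_le_one⟩ (fract_mem_Icc y) hfy
    have h4 : ((⌊x⌋ : ℤ) : ℝ) + 1 ≤ ((⌊y⌋ : ℤ) : ℝ) := by
      exact_mod_cast Int.lt_iff_add_one_le.mp hf
    rw [h01] at h2
    linarith

lemma perFun_surjective (hm : StrictMonoOn f₀ (Icc 0 1)) (h01 : f₀ 1 = f₀ 0 + 1)
    (hs : SurjOn f₀ (Icc 0 1) (Icc (f₀ 0) (f₀ 1))) :
    Function.Surjective (perFun f₀) := by
  intro y
  set k : ℤ := ⌊y - f₀ 0⌋ with hk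
  have hik : y - f₀ 0 - k ∈ Ico (0:ℝ) 1 := ⟨by
      have := Int.floor_le (y - f₀ 0); linarith, by
      have := Int.lt_floor_add_one (y - f₀ 0); linarith⟩
  have hmem : y - k ∈ Icc (f₀ 0) (f₀ 1) := by
    constructor
    · linarith [hik.1]
    · rw [h01]; linarith [hik.2]
  obtain ⟨x₀, hx₀, hfx₀⟩ := hs hmem
  rcases lt_or_eq_of_le hx₀.2 with hlt | heq
  · refine ⟨x₀ + k, ?_⟩
    unfold perFun
    have hfr : Int.fract (x₀ + (k:ℝ)) = x₀ := by
      rw [Int.fract_add_intCast]; exact Int.fract_eq_self.mpr ⟨hx₀.1, hlt⟩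
    have hfl : (⌊x₀ + (k:ℝ)⌋ : ℤ) = k := by
      rw [Int.floor_add_intCast, Int.floor_eq_zero_iff.mpr ⟨hx₀.1, hlt⟩, zero_add]
    rw [hfr, hfl, hfx₀]; ring
  · refine ⟨(k:ℝ) + 1, ?_⟩
    unfold perFun
    have h2 : (k:ℝ) + 1 = 0 + ((k + 1 : ℤ) : ℝ) := by push_cast; ring
    rw [h2, Int.fract_add_intCast, Int.floor_add_intCast, Int.fract_zero, Int.floor_zero,
      zero_add]
    have h3 : f₀ 1 = y - (k:ℝ) := by rw [heq] at hfx₀; exact hfx₀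
    push_cast
    rw [h01] at h3
    linarith

noncomputable def mkP (hm : StrictMonoOn f₀ (Icc 0 1)) (h01 : f₀ 1 = f₀ 0 + 1)
    (hs : SurjOn f₀ (Icc 0 1) (Icc (f₀ 0) (f₀ 1))) : HomeoZ :=
  mkZ (perFun f₀) (perFun_strictMono hm h01) (perFun_surjective hm h01 hs)
    (perFun_commZ f₀)

lemma mkP_ap (hm : StrictMonoOn f₀ (Icc 0 1)) (h01 : f₀ 1 = f₀ 0 + 1)
    (hs : SurjOn f₀ (Icc 0 1) (Icc (f₀ 0) (f₀ 1))) (x : ℝ) :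
    ((mkP hm h01 hs : HomeoZ) : ℝ ≃ₜ ℝ) x = f₀ (Int.fract x) + ⌊x⌋ := rfl

lemma mkP_ap_Icc (hm : StrictMonoOn f₀ (Icc 0 1)) (h01 : f₀ 1 = f₀ 0 + 1)
    (hs : SurjOn f₀ (Icc 0 1) (Icc (f₀ 0) (f₀ 1))) {x : ℝ}
    (hx : x ∈ Icc (0:ℝ) 1) : ((mkP hm h01 hs : HomeoZ) : ℝ ≃ₜ ℝ) x = f₀ x := by
  rcases lt_or_eq_of_le hx.2 with hlt | heq
  · rw [mkP_ap, Int.fract_eq_self.mpr ⟨hx.1, hlt⟩,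
      Int.floor_eq_zero_iff.mpr ⟨hx.1, hlt⟩]
    push_cast; ring
  · subst heq
    rw [mkP_ap]
    norm_num [h01]

end perFun

/-! ### The half translation `τ` -/

noncomputable def tau : HomeoZ :=
  ⟨Homeomorph.addRight ((1:ℝ)/2), fun x => by
    show x + 1 + 1/2 = x + 1/2 + 1; ring⟩

lemma tau_ap (x : ℝ) : ((tau : HomeoZ) : ℝ ≃ₜ ℝ) x = x + 1/2 := rfl

lemma tau_sq : tau * tau = tOne := by
  apply ext_z; intro x
  rw [mul_apz, tau_ap, tau_ap, tOne_ap]; ring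

/-! ### max lemmas -/

lemma m3_1 {a b d : ℝ} (h1 : b ≤ a) (h2 : d ≤ a) : max a (max b d) = a :=
  max_eq_left (max_le h1 h2)

lemma m3_2 {a b d : ℝ} (h1 : a ≤ b) (h2 : d ≤ b) : max a (max b d) = b := by
  rw [max_eq_left h2, max_eq_right h1]

lemma m3_3 {a b d : ℝ} (h1 : a ≤ d) (h2 : b ≤ d) : max a (max b d) = d := by
  rw [max_eq_right h2, max_eq_right h1]

end S16
namespace S16

open Set

/-! ### Square roots of `tOne` with prescribed value at `0` -/

noncomputable def ucFun (c : ℝ) : ℝ → ℝ := fun x =>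
  if x ≤ c then c + x * (1 - c) / c else 1 + (x - c) * c / (1 - c)

section uc
variable {c : ℝ}

lemma ucFun_lo {x : ℝ} (hx : x ≤ c) : ucFun c x = c + x * (1 - c) / c := if_pos hx

lemma ucFun_hi (hc : c ∈ Ioo (0:ℝ) 1) {x : ℝ} (hx : c ≤ x) :
    ucFun c x = 1 + (x - c) * c / (1 - c) := by
  unfold ucFun
  split_ifs with h
  · have hxc : x = c := le_antisymm h hx
    rw [hxc]
    have h1 : (0:ℝ) < c := hc.1
    have h2 : c < 1 := hc.2
    have h3 : c ≠ 0 := ne_of_gt h1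
    have h4 : (1:ℝ) - c ≠ 0 := by intro h5; simp at *; linarith
    field_simp
    ring
  · rfl

lemma ucFun_0 (hc : c ∈ Ioo (0:ℝ) 1) : ucFun c 0 = c := by
  have hc1 := hc.1
  rw [ucFun_lo hc1.le]; ring

lemma ucFun_1 (hc : c ∈ Ioo (0:ℝ) 1) : ucFun c 1 = c + 1 := by
  have h1 : (0:ℝ) < 1 - c := by linarith [hc.2]
  rw [ucFun_hi hc hc.2.le]
  field_simp; ring

lemma ucFun_mono (hc : c ∈ Ioo (0:ℝ) 1) : StrictMonoOn (ucFun c) (Icc 0 1) := by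
  have hc1 := hc.1; have hc2 := hc.2
  have h1c : (0:ℝ) < 1 - c := by linarith
  intro x hx y hy hxy
  rcases le_or_gt x c with hxc | hxc <;> rcases le_or_gt y c with hyc | hyc
  · rw [ucFun_lo hxc, ucFun_lo hyc]
    have : x * (1 - c) / c < y * (1 - c) / c :=
      (div_lt_div_iff_of_pos_right hc1).mpr (by nlinarith)
    linarith
  · rw [ucFun_lo hxc, ucFun_hi hc hyc.le]
    have h2 : x * (1 - c) / c ≤ 1 - c := by
      rw [div_le_iff₀ hc1]; nlinarith
    have h3 : 0 < (y - c) * c / (1 - c) := by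
      apply div_pos ?_ h1c; nlinarith
    linarith
  · linarith
  · rw [ucFun_hi hc hxc.le, ucFun_hi hc hyc.le]
    have : (x - c) * c / (1 - c) < (y - c) * c / (1 - c) :=
      (div_lt_div_iff_of_pos_right h1c).mpr (by nlinarith)
    linarith

lemma ucFun_surj (hc : c ∈ Ioo (0:ℝ) 1) : SurjOn (ucFun c) (Icc 0 1) (Icc (ucFun c 0) (ucFun c 1)) := by
  have hc1 := hc.1; have hc2 := hc.2
  have h1c : (0:ℝ) < 1 - c := by linarith
  rw [ucFun_0 hc, ucFun_1 hc]
  intro z hz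
  rcases le_or_gt z 1 with hz1 | hz1
  · refine ⟨(z - c) * c / (1 - c), ⟨?_, ?_⟩, ?_⟩
    · apply div_nonneg ?_ h1c.le
      nlinarith [hz.1]
    · rw [div_le_one h1c]
      nlinarith
    · have hle : (z - c) * c / (1 - c) ≤ c := by
        rw [div_le_iff₀ h1c]
        nlinarith
      rw [ucFun_lo hle]
      field_simp
      ring
  · refine ⟨c + (z - 1) * (1 - c) / c, ⟨?_, ?_⟩, ?_⟩
    · have h5 : 0 ≤ (z - 1) * (1 - c) / c := by
        apply div_nonneg ?_ hc1.le; nlinarith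
      linarith
    · have h5 : (z - 1) * (1 - c) / c ≤ 1 - c := by
        rw [div_le_iff₀ hc1]; nlinarith [hz.2]
      linarith
    · have hge : c ≤ c + (z - 1) * (1 - c) / c := by
        have : 0 < (z - 1) * (1 - c) / c := by
          apply div_pos ?_ hc1
          nlinarith
        linarith
      rw [ucFun_hi hc hge]
      field_simp
      ring

noncomputable def ucH (hc : c ∈ Ioo (0:ℝ) 1) : HomeoZ := mkP (ucFun_mono hc)
  (by rw [ucFun_0 hc, ucFun_1 hc]) (ucFun_surj hc)

lemma ucH_0 (hc : c ∈ Ioo (0:ℝ) 1) : ((ucH hc : HomeoZ) : ℝ ≃ₜ ℝ) 0 = c := by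
  have : (0:ℝ) ∈ Icc (0:ℝ) 1 := ⟨le_refl 0, zero_le_one⟩
  rw [ucH, mkP_ap_Icc _ _ _ this, ucFun_0 hc]

lemma ucH_sq (hc : c ∈ Ioo (0:ℝ) 1) : ucH hc * ucH hc = tOne := by
  have hc1 := hc.1; have hc2 := hc.2
  have h1c : (0:ℝ) < 1 - c := by linarith
  apply ext_z_Ico
  intro x hx
  rw [mul_apz, tOne_ap]
  have hIcc : x ∈ Icc (0:ℝ) 1 := ⟨hx.1, hx.2.le⟩
  have e1 : ((ucH hc : HomeoZ) : ℝ ≃ₜ ℝ) x = ucFun c x := mkP_ap_Icc _ _ _ hIcc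
  rcases lt_or_ge x c with hxc | hxc
  · -- first piece, image w ∈ [c, 1)
    set w := c + x * (1 - c) / c with hw
    have e2 : ucFun c x = w := ucFun_lo hxc.le
    have hwc : c ≤ w := by
      have h6 : 0 ≤ x * (1 - c) / c := by
        apply div_nonneg ?_ hc1.le
        nlinarith [hx.1]
      rw [hw]; linarith
    have hw1 : w < 1 := by
      rw [hw]
      have h6 : x * (1 - c) / c < c * (1 - c) / c :=
        (div_lt_div_iff_of_pos_right hc1).mpr (by nlinarith)
      have h3 : c * (1 - c) / c = 1 - c := by field_simp
      rw [h3] at h6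
      linarith
    have e3 : ((ucH hc : HomeoZ) : ℝ ≃ₜ ℝ) w = ucFun c w :=
      mkP_ap_Icc _ _ _ ⟨by linarith, hw1.le⟩
    rw [e1, e2, e3, ucFun_hi hc hwc]
    rw [hw]
    field_simp
    ring
  · -- second piece
    set w := (x - c) * c / (1 - c) with hw
    have e2 : ucFun c x = 1 + w := ucFun_hi hc hxc
    have hw0 : 0 ≤ w := by
      apply div_nonneg ?_ h1c.le
      nlinarith
    have hwc : w < c := by
      rw [hw, div_lt_iff₀ h1c]
      nlinarith [hx.2]
    have e4 : ((ucH hc : HomeoZ) : ℝ ≃ₜ ℝ) (1 + w) = ((ucH hc : HomeoZ) : ℝ ≃ₜ ℝ) w + 1 := by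
      rw [add_comm 1 w, memZ (ucH hc) w]
    have e5 : ((ucH hc : HomeoZ) : ℝ ≃ₜ ℝ) w = ucFun c w :=
      mkP_ap_Icc _ _ _ ⟨hw0, by linarith⟩
    rw [e1, e2, e4, e5, ucFun_lo hwc.le, hw]
    field_simp
    ring

end uc

end S16
namespace S16

open Set

/-! ### An explicit cube root `g` of `tOne`, with `g < τ` on `(0,1)` -/

noncomputable def gFun : ℝ → ℝ := fun x =>
  max (x/2 + 1/2) (max (x + 1/4) (2*x - 1/2))

lemma gFun_mono : StrictMono gFun := by
  have h1 : StrictMono (fun x : ℝ => x/2 + 1/2) := fun a b h => by dsimp; linarith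
  have h2 : StrictMono (fun x : ℝ => x + 1/4) := fun a b h => by dsimp; linarith
  have h3 : StrictMono (fun x : ℝ => 2*x - 1/2) := fun a b h => by dsimp; linarith
  intro a b h
  exact max_lt_max (h1 h) (max_lt_max (h2 h) (h3 h))

lemma gFun_0 : gFun 0 = 1/2 := by
  unfold gFun; rw [m3_1] <;> norm_num

lemma gFun_1 : gFun 1 = 3/2 := by
  unfold gFun; rw [m3_3] <;> norm_num

lemma gFun_h01 : gFun 1 = gFun 0 + 1 := by rw [gFun_0, gFun_1]; norm_num

lemma gFun_surj : SurjOn gFun (Icc 0 1) (Icc (gFun 0) (gFun 1)) := by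
  rw [gFun_0, gFun_1]
  intro z hz
  rcases le_or_gt z (3/4) with hz1 | hz1
  · refine ⟨2*z - 1, ⟨by linarith [hz.1], by linarith⟩, ?_⟩
    unfold gFun
    rw [m3_1 (by linarith) (by linarith)]
    ring
  · rcases le_or_gt z 1 with hz2 | hz2
    · refine ⟨z - 1/4, ⟨by linarith, by linarith⟩, ?_⟩
      unfold gFun
      rw [m3_2 (by linarith) (by linarith)]
      ring
    · refine ⟨z/2 + 1/4, ⟨by linarith, by linarith [hz.2]⟩, ?_⟩
      unfold gFun
      rw [m3_3 (by linarith) (by linarith)]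
      ring

noncomputable def gH : HomeoZ := mkP (gFun_mono.strictMonoOn _) gFun_h01 gFun_surj

lemma gH_Icc {x : ℝ} (hx : x ∈ Icc (0:ℝ) 1) : ((gH : HomeoZ) : ℝ ≃ₜ ℝ) x = gFun x :=
  mkP_ap_Icc _ _ _ hx

lemma gH_0 : ((gH : HomeoZ) : ℝ ≃ₜ ℝ) 0 = 1/2 := by
  rw [gH_Icc ⟨le_refl 0, zero_le_one⟩, gFun_0]

lemma gH_lt_tau {x : ℝ} (hx : x ∈ Ioo (0:ℝ) 1) :
    ((gH : HomeoZ) : ℝ ≃ₜ ℝ) x < x + 1/2 := by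
  rw [gH_Icc ⟨hx.1.le, hx.2.le⟩]
  unfold gFun
  have h1 := hx.1; have h2 := hx.2
  apply max_lt (by linarith) (max_lt (by linarith) (by linarith))

lemma gH_cube : gH * gH * gH = tOne := by
  apply ext_z_Ico
  intro x hx
  have hx0 := hx.1; have hx1 := hx.2
  rw [mul_apz, mul_apz, tOne_ap]
  rcases le_or_gt x (1/2) with hA | hA
  · -- x ∈ [0, 1/2]
    have e1 : ((gH : HomeoZ) : ℝ ≃ₜ ℝ) x = x/2 + 1/2 := by
      rw [gH_Icc ⟨hx0, by linarith⟩]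
      exact m3_1 (by linarith) (by linarith)
    have e2 : ((gH : HomeoZ) : ℝ ≃ₜ ℝ) (x/2 + 1/2) = x/2 + 3/4 := by
      rw [gH_Icc ⟨by linarith, by linarith⟩]
      unfold gFun
      rw [m3_2 (by linarith) (by linarith)]
      ring
    have e3 : ((gH : HomeoZ) : ℝ ≃ₜ ℝ) (x/2 + 3/4) = x + 1 := by
      rw [gH_Icc ⟨by linarith, by linarith⟩]
      unfold gFun
      rw [m3_3 (by linarith) (by linarith)]
      ring
    rw [e1, e2, e3]
  · rcases le_or_gt x (3/4) with hB | hB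
    · -- x ∈ (1/2, 3/4]
      have e1 : ((gH : HomeoZ) : ℝ ≃ₜ ℝ) x = x + 1/4 := by
        rw [gH_Icc ⟨hx0, by linarith⟩]
        exact m3_2 (by linarith) (by linarith)
      have e2 : ((gH : HomeoZ) : ℝ ≃ₜ ℝ) (x + 1/4) = 2*x := by
        rw [gH_Icc ⟨by linarith, by linarith⟩]
        unfold gFun
        rw [m3_3 (by linarith) (by linarith)]
        ring
      have e3 : ((gH : HomeoZ) : ℝ ≃ₜ ℝ) (2*x) = x + 1 := by
        have h4 : (2:ℝ)*x = (2*x - 1) + 1 := by ring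
        rw [h4, memZ gH (2*x - 1)]
        rw [gH_Icc ⟨by linarith, by linarith⟩]
        unfold gFun
        rw [m3_1 (by linarith) (by linarith)]
        ring
      rw [e1, e2, e3]
    · -- x ∈ (3/4, 1)
      have e1 : ((gH : HomeoZ) : ℝ ≃ₜ ℝ) x = 2*x - 1/2 := by
        rw [gH_Icc ⟨hx0, by linarith⟩]
        exact m3_3 (by linarith) (by linarith)
      have e2 : ((gH : HomeoZ) : ℝ ≃ₜ ℝ) (2*x - 1/2) = x + 3/4 := by
        have h4 : (2:ℝ)*x - 1/2 = (2*x - 3/2) + 1 := by ring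
        rw [h4, memZ gH (2*x - 3/2)]
        rw [gH_Icc ⟨by linarith, by linarith⟩]
        unfold gFun
        rw [m3_1 (by linarith) (by linarith)]
        ring
      have e3 : ((gH : HomeoZ) : ℝ ≃ₜ ℝ) (x + 3/4) = x + 1 := by
        have h4 : x + 3/4 = (x - 1/4) + 1 := by ring
        rw [h4, memZ gH (x - 1/4)]
        rw [gH_Icc ⟨by linarith, by linarith⟩]
        unfold gFun
        rw [m3_2 (by linarith) (by linarith)]
        ring
      rw [e1, e2, e3]

/-! ### The basic one-bump element `h0 = g⁻¹ τ` -/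

noncomputable def h0 : HomeoZ := gH⁻¹ * tau

lemma h0_ap (x : ℝ) :
    ((h0 : HomeoZ) : ℝ ≃ₜ ℝ) x = ((gH : HomeoZ) : ℝ ≃ₜ ℝ).symm (x + 1/2) := rfl

lemma h0_0 : ((h0 : HomeoZ) : ℝ ≃ₜ ℝ) 0 = 0 := by
  rw [h0_ap, symm_ap_eq, gH_0]
  norm_num

lemma h0_bump {x : ℝ} (hx : x ∈ Ioo (0:ℝ) 1) :
    x < ((h0 : HomeoZ) : ℝ ≃ₜ ℝ) x := by
  rw [h0_ap]
  have h2 : ((gH : HomeoZ) : ℝ ≃ₜ ℝ) x <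
      ((gH : HomeoZ) : ℝ ≃ₜ ℝ) (((gH : HomeoZ) : ℝ ≃ₜ ℝ).symm (x + 1/2)) := by
    rw [Homeomorph.apply_symm_apply]
    exact gH_lt_tau hx
  exact (zStrictMono gH).lt_iff_lt.mp h2

/-! ### The positive/negative part decomposition -/

noncomputable def hplus (h : HomeoZ) : HomeoZ :=
  mkZ (fun x => max ((h : ℝ ≃ₜ ℝ) x) x)
    (fun a b hab => max_lt_max (zStrictMono h hab) hab)
    (by
      intro y
      rcases le_total ((h : ℝ ≃ₜ ℝ).symm y) y with h1 | h1
      · refine ⟨(h : ℝ ≃ₜ ℝ).symm y, ?_⟩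
        dsimp only
        rw [Homeomorph.apply_symm_apply]
        exact max_eq_left h1
      · refine ⟨y, ?_⟩
        dsimp only
        have h2 : (h : ℝ ≃ₜ ℝ) y ≤ y := by
          have h3 := (zStrictMono h).monotone h1
          rwa [Homeomorph.apply_symm_apply] at h3
        exact max_eq_right h2)
    (by
      intro x
      dsimp only
      rw [memZ h x, max_add_add_right])

lemma hplus_ap (h : HomeoZ) (x : ℝ) :
    ((hplus h : HomeoZ) : ℝ ≃ₜ ℝ) x = max ((h : ℝ ≃ₜ ℝ) x) x := rfl

lemma hplus_ge (h : HomeoZ) (x : ℝ) : x ≤ ((hplus h : HomeoZ) : ℝ ≃ₜ ℝ) x :=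
  le_max_right _ _

lemma hplus_0 (h : HomeoZ) (h0 : (h : ℝ ≃ₜ ℝ) 0 = 0) :
    ((hplus h : HomeoZ) : ℝ ≃ₜ ℝ) 0 = 0 := by
  rw [hplus_ap, h0, max_self]

end S16
namespace S16

open Set Filter Topology

/-! ### Orbit machinery for one-bump elements -/

section orbit

variable (q : HomeoZ)

/-- The orbit of `1/2` under the powers of `q`. -/
noncomputable def orb (n : ℤ) : ℝ := (((q : ℝ ≃ₜ ℝ)) ^ n) (1/2)

lemma orb_succ (n : ℤ) : orb q (n + 1) = (q : ℝ ≃ₜ ℝ) (orb q n) := by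
  unfold orb
  rw [add_comm n 1, ← zpow_ap_zpow _ 1 n, zpow_one_ap]

lemma orb_pred (n : ℤ) : orb q (n - 1) = (q : ℝ ≃ₜ ℝ).symm (orb q n) := by
  symm
  rw [symm_ap_eq, ← orb_succ, sub_add_cancel]

variable (hq0 : (q : ℝ ≃ₜ ℝ) 0 = 0) (hqb : ∀ x ∈ Ioo (0:ℝ) 1, x < (q : ℝ ≃ₜ ℝ) x)

include hq0 in
lemma q_one : (q : ℝ ≃ₜ ℝ) 1 = 1 := by
  have := memZ q 0
  rw [zero_add, hq0, zero_add] at this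
  exact this

include hq0 in
lemma q_mapsIoo {x : ℝ} (hx : x ∈ Ioo (0:ℝ) 1) : (q : ℝ ≃ₜ ℝ) x ∈ Ioo (0:ℝ) 1 := by
  constructor
  · rw [← hq0]; exact zStrictMono q hx.1
  · rw [← q_one q hq0]; exact zStrictMono q hx.2

include hq0 in
lemma qsymm_mapsIoo {x : ℝ} (hx : x ∈ Ioo (0:ℝ) 1) :
    (q : ℝ ≃ₜ ℝ).symm x ∈ Ioo (0:ℝ) 1 := by
  have hs0 : (q : ℝ ≃ₜ ℝ).symm 0 = 0 := by rw [symm_ap_eq, hq0]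
  have hs1 : (q : ℝ ≃ₜ ℝ).symm 1 = 1 := by rw [symm_ap_eq, q_one q hq0]
  constructor
  · rw [← hs0]; exact symm_strictMono (zStrictMono q) hx.1
  · rw [← hs1]; exact symm_strictMono (zStrictMono q) hx.2

include hq0 in
lemma orb_mem (n : ℤ) : orb q n ∈ Ioo (0:ℝ) 1 := by
  induction n using Int.induction_on with
  | zero => unfold orb; rw [zpow_zero_ap]; norm_num
  | succ k ih => rw [orb_succ]; exact q_mapsIoo q hq0 ih
  | pred k ih =>
      have h1 : (-(k:ℤ) - 1 : ℤ) = -(k:ℤ) - 1 := rfl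
      rw [orb_pred]
      exact qsymm_mapsIoo q hq0 ih

include hq0 hqb in
lemma orb_mono : StrictMono (orb q) := by
  apply strictMono_int_of_lt_succ
  intro n
  rw [orb_succ]
  exact hqb _ (orb_mem q hq0 n)

include hq0 hqb in
lemma orb_exists_le {x : ℝ} (hx : x ∈ Ioo (0:ℝ) 1) : ∃ n : ℤ, orb q n ≤ x := by
  by_contra hcon
  push_neg at hcon
  set u : ℕ → ℝ := fun m => orb q (-(m:ℤ)) with hu
  have hanti : Antitone u := by
    intro m m' hm
    apply (orb_mono q hq0 hqb).monotone
    have h9 : (m:ℤ) ≤ (m':ℤ) := by exact_mod_cast hm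
    omega
  have hbdd : BddBelow (range u) := by
    refine ⟨0, ?_⟩
    rintro y ⟨m, rfl⟩
    exact (orb_mem q hq0 _).1.le
  have htend : Tendsto u atTop (𝓝 (⨅ m, u m)) := tendsto_atTop_ciInf hanti hbdd
  set L := ⨅ m, u m with hL
  have hstep : (fun m => (q : ℝ ≃ₜ ℝ).symm (u m)) = fun m => u (m + 1) := by
    funext m
    show (q : ℝ ≃ₜ ℝ).symm (orb q (-(m:ℤ))) = orb q (-((m:ℤ) + 1))
    rw [← orb_pred]
    congr 1
    ring
  have h1 : Tendsto (fun m => (q : ℝ ≃ₜ ℝ).symm (u m)) atTop (𝓝 ((q : ℝ ≃ₜ ℝ).symm L)) :=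
    ((q : ℝ ≃ₜ ℝ).symm.continuous.tendsto L).comp htend
  have h3 : Tendsto (fun m => u (m + 1)) atTop (𝓝 L) :=
    htend.comp (tendsto_add_atTop_nat 1)
  rw [hstep] at h1
  have hLfix : (q : ℝ ≃ₜ ℝ).symm L = L := tendsto_nhds_unique h1 h3
  have hQL : (q : ℝ ≃ₜ ℝ) L = L := by
    conv_lhs => rw [← hLfix]
    rw [Homeomorph.apply_symm_apply]
  have hL0 : 0 ≤ L := le_ciInf (fun m => (orb_mem q hq0 _).1.le)
  have hL1 : L < 1 := lt_of_le_of_lt (ciInf_le hbdd 0) (orb_mem q hq0 _).2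
  have hLz : L = 0 := by
    by_contra hLz
    have : L ∈ Ioo (0:ℝ) 1 := ⟨lt_of_le_of_ne hL0 (Ne.symm hLz), hL1⟩
    exact absurd hQL (ne_of_gt (hqb L this))
  have hxL : x ≤ L := le_ciInf (fun m => (hcon _).le)
  rw [hLz] at hxL
  exact absurd hxL (not_le.mpr hx.1)

include hq0 hqb in
lemma orb_exists_gt {x : ℝ} (hx : x ∈ Ioo (0:ℝ) 1) : ∃ n : ℤ, x < orb q n := by
  by_contra hcon
  push_neg at hcon
  set u : ℕ → ℝ := fun m => orb q (m:ℤ) with hu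
  have hmono : Monotone u := by
    intro m m' hm
    exact (orb_mono q hq0 hqb).monotone (by exact_mod_cast hm)
  have hbdd : BddAbove (range u) := by
    refine ⟨1, ?_⟩
    rintro y ⟨m, rfl⟩
    exact (orb_mem q hq0 _).2.le
  have htend : Tendsto u atTop (𝓝 (⨆ m, u m)) := tendsto_atTop_ciSup hmono hbdd
  set M := ⨆ m, u m with hM
  have hstep : (fun m => (q : ℝ ≃ₜ ℝ) (u m)) = fun m => u (m + 1) := by
    funext m
    show (q : ℝ ≃ₜ ℝ) (orb q (m:ℤ)) = orb q ((m:ℤ) + 1)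
    rw [orb_succ]
  have h1 : Tendsto (fun m => (q : ℝ ≃ₜ ℝ) (u m)) atTop (𝓝 ((q : ℝ ≃ₜ ℝ) M)) :=
    ((q : ℝ ≃ₜ ℝ).continuous.tendsto M).comp htend
  have h3 : Tendsto (fun m => u (m + 1)) atTop (𝓝 M) :=
    htend.comp (tendsto_add_atTop_nat 1)
  rw [hstep] at h1
  have hQM : (q : ℝ ≃ₜ ℝ) M = M := tendsto_nhds_unique h1 h3
  have hM1 : M ≤ 1 := ciSup_le (fun m => (orb_mem q hq0 _).2.le)
  have hM0 : 0 < M := lt_of_lt_of_le (orb_mem q hq0 0).1 (le_ciSup hbdd 0)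
  have hMe : M = 1 := by
    by_contra hMe
    have : M ∈ Ioo (0:ℝ) 1 := ⟨hM0, lt_of_le_of_ne hM1 hMe⟩
    exact absurd hQM (ne_of_gt (hqb M this))
  have hxM : M ≤ x := ciSup_le (fun m => hcon _)
  rw [hMe] at hxM
  exact absurd hxM (not_le.mpr hx.2)

include hq0 hqb in
lemma orb_sandwich {x : ℝ} (hx : x ∈ Ioo (0:ℝ) 1) :
    ∃! n : ℤ, orb q n ≤ x ∧ x < orb q (n + 1) := by
  obtain ⟨hi, hhi⟩ := orb_exists_gt q hq0 hqb hx
  obtain ⟨lo, hlo⟩ := orb_exists_le q hq0 hqb hx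
  obtain ⟨n, hn, hmax⟩ := Int.exists_greatest_of_bdd
    (P := fun n => orb q n ≤ x)
    ⟨hi, fun z hz => ((orb_mono q hq0 hqb).lt_iff_lt.mp (lt_of_le_of_lt hz hhi)).le⟩
    ⟨lo, hlo⟩
  refine ⟨n, ⟨hn, ?_⟩, ?_⟩
  · by_contra hcon
    push_neg at hcon
    have := hmax _ hcon
    omega
  · rintro m ⟨hm1, hm2⟩
    have h1 : m ≤ n := hmax _ hm1
    have h2 : n < m + 1 := (orb_mono q hq0 hqb).lt_iff_lt.mp (lt_of_le_of_lt hn hm2)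
    omega

/-- The index of the orbit interval containing `x`. -/
noncomputable def nIdx (x : ℝ) : ℤ :=
  if hx : x ∈ Ioo (0:ℝ) 1 then (orb_sandwich q hq0 hqb hx).exists.choose else 0

lemma nIdx_spec {x : ℝ} (hx : x ∈ Ioo (0:ℝ) 1) :
    orb q (nIdx q hq0 hqb x) ≤ x ∧ x < orb q (nIdx q hq0 hqb x + 1) := by
  rw [nIdx, dif_pos hx]
  exact (orb_sandwich q hq0 hqb hx).exists.choose_spec

lemma nIdx_eq {x : ℝ} (hx : x ∈ Ioo (0:ℝ) 1) {n : ℤ}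
    (hn : orb q n ≤ x ∧ x < orb q (n + 1)) : nIdx q hq0 hqb x = n :=
  (orb_sandwich q hq0 hqb hx).unique (nIdx_spec q hq0 hqb hx) hn

end orbit

end S16
namespace S16

open Set Filter Topology

/-! ### The conjugacy lemma for one-bump elements -/

lemma commZ_eq_on_Ico {F G : ℝ → ℝ} (hF : CommZ F) (hG : CommZ G)
    (heq : ∀ x ∈ Ico (0:ℝ) 1, F x = G x) : ∀ x, F x = G x := by
  intro x
  have hx : x = Int.fract x + (⌊x⌋ : ℤ) := by
    rw [Int.fract]; push_cast; ring
  rw [hx, hF.int, hG.int, heq _ ⟨Int.fract_nonneg x, Int.fract_lt_one x⟩]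

section conj

variable (q h : HomeoZ)

/-- Affine map sending `[1/2, q(1/2)]` to `[1/2, h(1/2)]`. -/
noncomputable def aff : ℝ → ℝ := fun y =>
  1/2 + (y - 1/2) * (((h : ℝ ≃ₜ ℝ) (1/2) - 1/2) / ((q : ℝ ≃ₜ ℝ) (1/2) - 1/2))

variable (hq0 : (q : ℝ ≃ₜ ℝ) 0 = 0) (hqb : ∀ x ∈ Ioo (0:ℝ) 1, x < (q : ℝ ≃ₜ ℝ) x)
variable (hh0 : (h : ℝ ≃ₜ ℝ) 0 = 0) (hhb : ∀ x ∈ Ioo (0:ℝ) 1, x < (h : ℝ ≃ₜ ℝ) x)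

include hqb in
lemma dq_pos : 0 < (q : ℝ ≃ₜ ℝ) (1/2) - 1/2 := by
  have := hqb (1/2) (by norm_num)
  linarith

include hqb hhb in
lemma aff_mono : StrictMono (aff q h) := by
  intro a b hab
  unfold aff
  have h1 := dq_pos q hqb
  have h2 := dq_pos h hhb
  have h3 : 0 < ((h : ℝ ≃ₜ ℝ) (1/2) - 1/2) / ((q : ℝ ≃ₜ ℝ) (1/2) - 1/2) :=
    div_pos h2 h1
  nlinarith

lemma aff_half : aff q h (1/2) = 1/2 := by
  unfold aff; ring

include hqb in
lemma aff_top : aff q h ((q : ℝ ≃ₜ ℝ) (1/2)) = (h : ℝ ≃ₜ ℝ) (1/2) := by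
  unfold aff
  have h1 := dq_pos q hqb
  rw [mul_comm, div_mul_cancel₀ _ (ne_of_gt h1)]
  ring

include hqb hhb in
lemma aff_aff (z : ℝ) : aff q h (aff h q z) = z := by
  have h1 := dq_pos q hqb
  have h2 := dq_pos h hhb
  have h3 : ((q : ℝ ≃ₜ ℝ) (1/2) - 1/2) / ((h : ℝ ≃ₜ ℝ) (1/2) - 1/2) *
      (((h : ℝ ≃ₜ ℝ) (1/2) - 1/2) / ((q : ℝ ≃ₜ ℝ) (1/2) - 1/2)) = 1 := by
    rw [div_mul_div_comm, mul_comm ((q : ℝ ≃ₜ ℝ) (1/2) - 1/2)]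
    exact div_self (ne_of_gt (mul_pos h2 h1))
  unfold aff
  rw [add_sub_cancel_left, mul_assoc, h3, mul_one]
  ring

/-- The conjugating map on `(0,1)`. -/
noncomputable def pFun : ℝ → ℝ := fun x =>
  ((h : ℝ ≃ₜ ℝ) ^ (nIdx q hq0 hqb x))
    (aff q h (((q : ℝ ≃ₜ ℝ) ^ (-(nIdx q hq0 hqb x))) x))

include hq0 hqb in
lemma qzpow_mem {x : ℝ} {n : ℤ}
    (hn : orb q n ≤ x ∧ x < orb q (n + 1)) :
    (1:ℝ)/2 ≤ ((q : ℝ ≃ₜ ℝ) ^ (-n)) x ∧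
      ((q : ℝ ≃ₜ ℝ) ^ (-n)) x < (q : ℝ ≃ₜ ℝ) (1/2) := by
  have hmono := strictMono_zpow (zStrictMono q) (-n)
  constructor
  · have h1 := hmono.monotone hn.1
    rwa [show orb q n = ((q : ℝ ≃ₜ ℝ) ^ n) (1/2) from rfl, zpow_ap_zpow,
      neg_add_cancel, zpow_zero_ap] at h1
  · have h1 := hmono hn.2
    rwa [show orb q (n+1) = ((q : ℝ ≃ₜ ℝ) ^ (n+1)) (1/2) from rfl, zpow_ap_zpow,
      show -n + (n + 1) = (1:ℤ) by ring, zpow_one_ap] at h1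

include hq0 hqb hhb in
lemma pFun_mem {x : ℝ} (hx : x ∈ Ioo (0:ℝ) 1) :
    orb h (nIdx q hq0 hqb x) ≤ pFun q h hq0 hqb x ∧
      pFun q h hq0 hqb x < orb h (nIdx q hq0 hqb x + 1) := by
  set n := nIdx q hq0 hqb x with hn
  have hsand := nIdx_spec q hq0 hqb hx
  have hq1 := qzpow_mem q hq0 hqb hsand
  have ha1 : (1:ℝ)/2 ≤ aff q h (((q : ℝ ≃ₜ ℝ) ^ (-n)) x) := by
    have := (aff_mono q h hqb hhb).monotone hq1.1
    rwa [aff_half] at this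
  have ha2 : aff q h (((q : ℝ ≃ₜ ℝ) ^ (-n)) x) < (h : ℝ ≃ₜ ℝ) (1/2) := by
    have := aff_mono q h hqb hhb hq1.2
    rwa [aff_top q h hqb] at this
  have hmono := strictMono_zpow (zStrictMono h) n
  constructor
  · exact hmono.monotone ha1
  · have h1 := hmono ha2
    have h2 : ((h : ℝ ≃ₜ ℝ) ^ n) ((h : ℝ ≃ₜ ℝ) (1/2)) = orb h (n + 1) := by
      rw [← zpow_one_ap (h : ℝ ≃ₜ ℝ) (1/2), zpow_ap_zpow]
      rfl
    rwa [h2] at h1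

include hq0 hqb hh0 hhb in
lemma pFun_Ioo {x : ℝ} (hx : x ∈ Ioo (0:ℝ) 1) :
    pFun q h hq0 hqb x ∈ Ioo (0:ℝ) 1 := by
  have h1 := pFun_mem q h hq0 hqb hhb hx
  constructor
  · exact lt_of_lt_of_le (orb_mem h hh0 _).1 h1.1
  · exact lt_trans h1.2 (orb_mem h hh0 _).2

include hq0 hqb hh0 hhb in
lemma pFun_mono : StrictMonoOn (pFun q h hq0 hqb) (Ioo (0:ℝ) 1) := by
  intro x hx y hy hxy
  have hsx := nIdx_spec q hq0 hqb hx
  have hsy := nIdx_spec q hq0 hqb hy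
  set nx := nIdx q hq0 hqb x with hnx
  set ny := nIdx q hq0 hqb y with hny
  rcases lt_trichotomy nx ny with hlt | heq | hgt
  · have h1 := (pFun_mem q h hq0 hqb hhb hx).2
    have h2 := (pFun_mem q h hq0 hqb hhb hy).1
    have h3 : orb h (nx + 1) ≤ orb h ny :=
      (orb_mono h hh0 hhb).monotone (by omega)
    calc pFun q h hq0 hqb x < orb h (nx + 1) := h1
      _ ≤ orb h ny := h3
      _ ≤ pFun q h hq0 hqb y := h2
  · show ((h : ℝ ≃ₜ ℝ) ^ nx) (aff q h (((q : ℝ ≃ₜ ℝ) ^ (-nx)) x)) <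
      ((h : ℝ ≃ₜ ℝ) ^ ny) (aff q h (((q : ℝ ≃ₜ ℝ) ^ (-ny)) y))
    rw [← heq]
    exact strictMono_zpow (zStrictMono h) nx
      (aff_mono q h hqb hhb (strictMono_zpow (zStrictMono q) (-nx) hxy))
  · exfalso
    have h3 : orb q (ny + 1) ≤ orb q nx :=
      (orb_mono q hq0 hqb).monotone (by omega)
    have : y < y := lt_of_lt_of_le (lt_of_lt_of_le hsy.2 h3)
      (le_trans hsx.1 hxy.le)
    exact absurd this (lt_irrefl y)

include hq0 hqb hh0 hhb in
lemma pFun_surj {z : ℝ} (hz : z ∈ Ioo (0:ℝ) 1) :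
    ∃ x ∈ Ioo (0:ℝ) 1, pFun q h hq0 hqb x = z := by
  set m := nIdx h hh0 hhb z with hm
  have hsand := nIdx_spec h hh0 hhb hz
  have hw := qzpow_mem h hh0 hhb hsand
  set w := ((h : ℝ ≃ₜ ℝ) ^ (-m)) z with hwdef
  have hv1 : (1:ℝ)/2 ≤ aff h q w := by
    have := (aff_mono h q hhb hqb).monotone hw.1
    rwa [aff_half] at this
  have hv2 : aff h q w < (q : ℝ ≃ₜ ℝ) (1/2) := by
    have := aff_mono h q hhb hqb hw.2
    rwa [aff_top h q hhb] at this
  set x := ((q : ℝ ≃ₜ ℝ) ^ m) (aff h q w) with hxdef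
  have hmono := strictMono_zpow (zStrictMono q) m
  have hx1 : orb q m ≤ x := hmono.monotone hv1
  have hx2 : x < orb q (m + 1) := by
    have h1 := hmono hv2
    have h2 : ((q : ℝ ≃ₜ ℝ) ^ m) ((q : ℝ ≃ₜ ℝ) (1/2)) = orb q (m + 1) := by
      rw [← zpow_one_ap (q : ℝ ≃ₜ ℝ) (1/2), zpow_ap_zpow]
      rfl
    rwa [h2] at h1
  have hxIoo : x ∈ Ioo (0:ℝ) 1 := by
    constructor
    · exact lt_of_lt_of_le (orb_mem q hq0 _).1 hx1
    · exact lt_trans hx2 (orb_mem q hq0 _).2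
  refine ⟨x, hxIoo, ?_⟩
  have hidx : nIdx q hq0 hqb x = m := nIdx_eq q hq0 hqb hxIoo ⟨hx1, hx2⟩
  show ((h : ℝ ≃ₜ ℝ) ^ (nIdx q hq0 hqb x))
      (aff q h (((q : ℝ ≃ₜ ℝ) ^ (-(nIdx q hq0 hqb x))) x)) = z
  rw [hidx]
  have e1 : ((q : ℝ ≃ₜ ℝ) ^ (-m)) x = aff h q w := by
    rw [hxdef, zpow_ap_zpow, neg_add_cancel, zpow_zero_ap]
  rw [e1, aff_aff q h hqb hhb, hwdef, zpow_ap_zpow]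
  rw [show m + -m = (0:ℤ) by ring, zpow_zero_ap]

include hq0 hqb hh0 hhb in
lemma pFun_equiv {x : ℝ} (hx : x ∈ Ioo (0:ℝ) 1) :
    pFun q h hq0 hqb ((q : ℝ ≃ₜ ℝ) x) = (h : ℝ ≃ₜ ℝ) (pFun q h hq0 hqb x) := by
  have hqx : (q : ℝ ≃ₜ ℝ) x ∈ Ioo (0:ℝ) 1 := q_mapsIoo q hq0 hx
  set n := nIdx q hq0 hqb x with hn
  have hsand := nIdx_spec q hq0 hqb hx
  have hidx : nIdx q hq0 hqb ((q : ℝ ≃ₜ ℝ) x) = n + 1 := by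
    apply nIdx_eq q hq0 hqb hqx
    constructor
    · rw [orb_succ]
      exact (zStrictMono q).monotone hsand.1
    · rw [show n + 1 + 1 = (n + 1) + 1 from rfl, orb_succ]
      exact zStrictMono q hsand.2
  show ((h : ℝ ≃ₜ ℝ) ^ (nIdx q hq0 hqb ((q : ℝ ≃ₜ ℝ) x)))
      (aff q h (((q : ℝ ≃ₜ ℝ) ^ (-(nIdx q hq0 hqb ((q : ℝ ≃ₜ ℝ) x)))) ((q : ℝ ≃ₜ ℝ) x)))
    = (h : ℝ ≃ₜ ℝ) (((h : ℝ ≃ₜ ℝ) ^ n) (aff q h (((q : ℝ ≃ₜ ℝ) ^ (-n)) x)))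
  rw [hidx]
  have e1 : ((q : ℝ ≃ₜ ℝ) ^ (-(n+1))) ((q : ℝ ≃ₜ ℝ) x) = ((q : ℝ ≃ₜ ℝ) ^ (-n)) x := by
    rw [← zpow_one_ap (q : ℝ ≃ₜ ℝ) x, zpow_ap_zpow]
    congr 1
    ring
  rw [e1]
  rw [← zpow_one_ap (h : ℝ ≃ₜ ℝ) (((h : ℝ ≃ₜ ℝ) ^ n) _), zpow_ap_zpow]
  congr 1
  ring

open scoped Classical in
/-- Extension of `pFun` to a fundamental domain. -/
noncomputable def pFull : ℝ → ℝ := fun x =>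
  if x ∈ Ioo (0:ℝ) 1 then pFun q h hq0 hqb x else x

include hq0 hqb hh0 hhb in
lemma pFull_0 : pFull q h hq0 hqb 0 = 0 := by
  rw [pFull, if_neg (by norm_num)]

include hq0 hqb hh0 hhb in
lemma pFull_1 : pFull q h hq0 hqb 1 = 1 := by
  rw [pFull, if_neg (by norm_num)]

include hq0 hqb hh0 hhb in
lemma pFull_Ioo {x : ℝ} (hx : x ∈ Ioo (0:ℝ) 1) :
    pFull q h hq0 hqb x = pFun q h hq0 hqb x := by
  rw [pFull, if_pos hx]

include hq0 hqb hh0 hhb in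
lemma pFull_mono : StrictMonoOn (pFull q h hq0 hqb) (Icc 0 1) := by
  intro x hx y hy hxy
  rcases eq_or_lt_of_le hx.1 with hx0 | hx0
  · rw [← hx0, pFull_0 q h hq0 hqb hh0 hhb]
    rcases eq_or_lt_of_le hy.2 with hy1 | hy1
    · rw [hy1, pFull_1 q h hq0 hqb hh0 hhb]; norm_num
    · have hyI : y ∈ Ioo (0:ℝ) 1 := ⟨by rw [← hx0] at hxy; exact hxy, hy1⟩
      rw [pFull_Ioo q h hq0 hqb hh0 hhb hyI]
      exact (pFun_Ioo q h hq0 hqb hh0 hhb hyI).1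
  · rcases eq_or_lt_of_le hy.2 with hy1 | hy1
    · have hxI : x ∈ Ioo (0:ℝ) 1 := ⟨hx0, by rw [hy1] at hxy; exact hxy⟩
      rw [hy1, pFull_1 q h hq0 hqb hh0 hhb, pFull_Ioo q h hq0 hqb hh0 hhb hxI]
      exact (pFun_Ioo q h hq0 hqb hh0 hhb hxI).2
    · have hxI : x ∈ Ioo (0:ℝ) 1 := ⟨hx0, lt_trans hxy hy1⟩
      have hyI : y ∈ Ioo (0:ℝ) 1 := ⟨lt_trans hx0 hxy, hy1⟩
      rw [pFull_Ioo q h hq0 hqb hh0 hhb hxI, pFull_Ioo q h hq0 hqb hh0 hhb hyI]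
      exact pFun_mono q h hq0 hqb hh0 hhb hxI hyI hxy

include hq0 hqb hh0 hhb in
lemma pFull_surj : SurjOn (pFull q h hq0 hqb) (Icc 0 1)
    (Icc (pFull q h hq0 hqb 0) (pFull q h hq0 hqb 1)) := by
  rw [pFull_0 q h hq0 hqb hh0 hhb, pFull_1 q h hq0 hqb hh0 hhb]
  intro z hz
  rcases eq_or_lt_of_le hz.1 with hz0 | hz0
  · exact ⟨0, ⟨le_refl 0, zero_le_one⟩, by
      rw [pFull_0 q h hq0 hqb hh0 hhb, ← hz0]⟩
  · rcases eq_or_lt_of_le hz.2 with hz1 | hz1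
    · exact ⟨1, ⟨zero_le_one, le_refl 1⟩, by
        rw [pFull_1 q h hq0 hqb hh0 hhb, hz1]⟩
    · obtain ⟨x, hxI, hfx⟩ := pFun_surj q h hq0 hqb hh0 hhb ⟨hz0, hz1⟩
      exact ⟨x, ⟨hxI.1.le, hxI.2.le⟩, by
        rw [pFull_Ioo q h hq0 hqb hh0 hhb hxI, hfx]⟩

include hq0 hqb hh0 hhb in
lemma conj_exists : ∃ p : HomeoZ, p * q = h * p := by
  have h01 : pFull q h hq0 hqb 1 = pFull q h hq0 hqb 0 + 1 := by
    rw [pFull_0 q h hq0 hqb hh0 hhb, pFull_1 q h hq0 hqb hh0 hhb]; norm_num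
  set P : HomeoZ := mkP (pFull_mono q h hq0 hqb hh0 hhb) h01
    (pFull_surj q h hq0 hqb hh0 hhb) with hP
  have hPIcc : ∀ x ∈ Icc (0:ℝ) 1, (P : ℝ ≃ₜ ℝ) x = pFull q h hq0 hqb x :=
    fun x hx => mkP_ap_Icc _ _ _ hx
  refine ⟨P, ?_⟩
  apply ext_z
  have key : ∀ x, (P : ℝ ≃ₜ ℝ) ((q : ℝ ≃ₜ ℝ) x) = (h : ℝ ≃ₜ ℝ) ((P : ℝ ≃ₜ ℝ) x) := by
    apply commZ_eq_on_Ico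
    · exact (memZ P).comp (memZ q)
    · exact (memZ h).comp (memZ P)
    · intro x hx
      rcases eq_or_lt_of_le hx.1 with hx0 | hx0
      · rw [← hx0, hq0]
        have hP0 : (P : ℝ ≃ₜ ℝ) 0 = 0 := by
          rw [hPIcc 0 ⟨le_refl 0, zero_le_one⟩, pFull_0 q h hq0 hqb hh0 hhb]
        rw [hP0, hh0]
      · have hxI : x ∈ Ioo (0:ℝ) 1 := ⟨hx0, hx.2⟩
        have hqxI : (q : ℝ ≃ₜ ℝ) x ∈ Ioo (0:ℝ) 1 := q_mapsIoo q hq0 hxI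
        rw [hPIcc _ ⟨hqxI.1.le, hqxI.2.le⟩, pFull_Ioo q h hq0 hqb hh0 hhb hqxI,
          hPIcc _ ⟨hxI.1.le, hxI.2.le⟩, pFull_Ioo q h hq0 hqb hh0 hhb hxI]
        exact pFun_equiv q h hq0 hqb hh0 hhb hxI
  intro x
  rw [mul_apz, mul_apz]
  exact key x

end conj

end S16
namespace S16

open Set

/-! ### Fixed points of powers -/

lemma pow_strictMono {f : ℝ ≃ₜ ℝ} (hm : StrictMono f) (n : ℕ) :
    StrictMono ⇑(f ^ n) := by
  induction n with
  | zero => rw [pow_zero]; exact strictMono_id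
  | succ k ih =>
      rw [pow_succ]
      exact fun a b hab => ih (hm hab)

lemma pow_lt_of_lt {f : ℝ ≃ₜ ℝ} (hm : StrictMono f) {x : ℝ} (hx : x < f x) :
    ∀ n : ℕ, n ≠ 0 → x < (f ^ n) x := by
  intro n hn
  induction n with
  | zero => omega
  | succ k ih =>
      rcases Nat.eq_zero_or_pos k with hk | hk
      · subst hk
        rw [pow_one]; exact hx
      · have h1 := ih (by omega)
        have h2 : (f ^ k) x < (f ^ k) (f x) := pow_strictMono hm k hx
        have h3 : (f ^ k) (f x) = (f ^ (k+1)) x := by rw [pow_succ]; rfl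
        rw [h3] at h2
        exact lt_trans h1 h2

lemma pow_gt_of_gt {f : ℝ ≃ₜ ℝ} (hm : StrictMono f) {x : ℝ} (hx : f x < x) :
    ∀ n : ℕ, n ≠ 0 → (f ^ n) x < x := by
  intro n hn
  induction n with
  | zero => omega
  | succ k ih =>
      rcases Nat.eq_zero_or_pos k with hk | hk
      · subst hk
        rw [pow_one]; exact hx
      · have h1 := ih (by omega)
        have h2 : (f ^ k) (f x) < (f ^ k) x := pow_strictMono hm k hx
        have h3 : (f ^ k) (f x) = (f ^ (k+1)) x := by rw [pow_succ]; rfl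
        rw [h3] at h2
        exact lt_trans h2 h1

lemma inv_fix {f : ℝ ≃ₜ ℝ} {x : ℝ} (hf : f x = x) : (f⁻¹) x = x := by
  rw [inv_ap, symm_ap_eq]; exact hf.symm

lemma zpow_fix {f : ℝ ≃ₜ ℝ} {x : ℝ} (hf : f x = x) (m : ℤ) : (f ^ m) x = x := by
  induction m using Int.induction_on with
  | zero => rw [zpow_zero_ap]
  | succ k ih =>
      have h3 : f ^ ((k:ℤ) + 1) = f ^ (k:ℤ) * f := by rw [zpow_add, zpow_one]
      rw [h3, mul_ap, hf, ih]
  | pred k ih =>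
      have h3 : f ^ (-(k:ℤ) - 1) = f ^ (-(k:ℤ)) * f⁻¹ := by rw [zpow_sub, zpow_one]
      rw [h3, mul_ap, inv_fix hf, ih]

/-! ### The `Good` predicate -/

variable (ψ : HomeoZ →* HomeoPlus)

def Good (f : HomeoZ) : Prop :=
  ∀ x : ℝ, ((ψ tOne : HomeoPlus) : ℝ ≃ₜ ℝ) x = x →
    ((ψ f : HomeoPlus) : ℝ ≃ₜ ℝ) x = x

lemma Good_mul {f g : HomeoZ} (hf : Good ψ f) (hg : Good ψ g) : Good ψ (f * g) := by
  intro x hx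
  rw [map_mul]
  show ((ψ f : HomeoPlus) : ℝ ≃ₜ ℝ) (((ψ g : HomeoPlus) : ℝ ≃ₜ ℝ) x) = x
  rw [hg x hx, hf x hx]

lemma Good_inv {f : HomeoZ} (hf : Good ψ f) : Good ψ f⁻¹ := by
  intro x hx
  rw [map_inv]
  show ((ψ f : HomeoPlus) : ℝ ≃ₜ ℝ).symm x = x
  rw [symm_ap_eq]
  exact (hf x hx).symm

lemma Good_root (s : HomeoZ) (n : ℕ) (hn : n ≠ 0) (m : ℤ)
    (hs : s ^ n = tOne ^ m) : Good ψ s := by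
  intro x hx
  have hTm : ((ψ (tOne ^ m) : HomeoPlus) : ℝ ≃ₜ ℝ) x = x := by
    rw [map_zpow, SubgroupClass.coe_zpow]
    exact zpow_fix hx m
  have h2 : ((ψ (s ^ n) : HomeoPlus) : ℝ ≃ₜ ℝ) x = x := by rw [hs]; exact hTm
  rw [map_pow, SubmonoidClass.coe_pow] at h2
  have hmono : StrictMono ⇑((ψ s : HomeoPlus) : ℝ ≃ₜ ℝ) := (ψ s).2
  rcases lt_trichotomy (((ψ s : HomeoPlus) : ℝ ≃ₜ ℝ) x) x with hlt | heq | hgt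
  · exact absurd h2 (ne_of_lt (pow_gt_of_gt hmono hlt n hn))
  · exact heq
  · exact absurd h2 (ne_of_gt (pow_lt_of_lt hmono hgt n hn))

lemma conj_pow_z (P s : HomeoZ) (n : ℕ) :
    (P⁻¹ * s * P) ^ n = P⁻¹ * s ^ n * P := by
  induction n with
  | zero => rw [pow_zero, pow_zero]; group
  | succ k ih => rw [pow_succ, pow_succ, ih]; group

lemma Good_conj_root (P s : HomeoZ) (n : ℕ) (hn : n ≠ 0) (m : ℤ)
    (hs : s ^ n = tOne ^ m) : Good ψ (P⁻¹ * s * P) := by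
  apply Good_root ψ _ n hn m
  rw [conj_pow_z, hs, conj_tOne_zpow]

lemma gH_cube_pow : gH ^ 3 = tOne ^ (1:ℤ) := by
  rw [zpow_one, ← gH_cube]
  rw [pow_succ, pow_succ, pow_one]

lemma gH_inv_cube_pow : gH⁻¹ ^ 3 = tOne ^ (-1:ℤ) := by
  rw [inv_pow, gH_cube_pow, zpow_one, zpow_neg_one]

lemma tau_sq_pow : tau ^ 2 = tOne ^ (1:ℤ) := by
  rw [zpow_one, ← tau_sq, pow_two]

lemma good_h0 : Good ψ h0 :=
  Good_mul ψ (Good_inv ψ (Good_root ψ gH 3 (by norm_num) 1 gH_cube_pow))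
    (Good_root ψ tau 2 (by norm_num) 1 tau_sq_pow)

/-! ### Every element with a fixed point at `0` is good -/

lemma good_fix0 (h : HomeoZ) (hh0 : (h : ℝ ≃ₜ ℝ) 0 = 0) : Good ψ h := by
  set hp := hplus h with hhp
  set hm := hp⁻¹ * h with hhm
  have hp0 : (hp : ℝ ≃ₜ ℝ) 0 = 0 := hplus_0 h hh0
  have hpge : ∀ x, x ≤ (hp : ℝ ≃ₜ ℝ) x := hplus_ge h
  have hm0 : (hm : ℝ ≃ₜ ℝ) 0 = 0 := by
    rw [hhm, mul_apz, inv_apz, hh0, symm_ap_eq, hp0]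
  have hmle : ∀ x, (hm : ℝ ≃ₜ ℝ) x ≤ x := by
    intro x
    rw [hhm, mul_apz, inv_apz]
    have h1 : (h : ℝ ≃ₜ ℝ) x ≤ (hp : ℝ ≃ₜ ℝ) x := le_max_left _ _
    have h3 := (symm_strictMono (zStrictMono hp)).monotone h1
    rwa [Homeomorph.symm_apply_apply] at h3
  have hminv_ge : ∀ x, x ≤ ((hm⁻¹ : HomeoZ) : ℝ ≃ₜ ℝ) x := by
    intro x
    rw [inv_apz]
    have h1 := hmle ((hm : ℝ ≃ₜ ℝ).symm x)
    rwa [Homeomorph.apply_symm_apply] at h1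
  have hminv0 : ((hm⁻¹ : HomeoZ) : ℝ ≃ₜ ℝ) 0 = 0 := by
    rw [inv_apz, symm_ap_eq]; exact hm0.symm
  set q₁ := hp * h0 with hq₁
  set q₂ := hm⁻¹ * h0 with hq₂
  have q₁0 : (q₁ : ℝ ≃ₜ ℝ) 0 = 0 := by
    rw [hq₁, mul_apz, h0_0, hp0]
  have q₁b : ∀ x ∈ Ioo (0:ℝ) 1, x < (q₁ : ℝ ≃ₜ ℝ) x := by
    intro x hx
    rw [hq₁, mul_apz]
    exact lt_of_lt_of_le (h0_bump hx) (hpge _)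
  have q₂0 : (q₂ : ℝ ≃ₜ ℝ) 0 = 0 := by
    rw [hq₂, mul_apz, h0_0, hminv0]
  have q₂b : ∀ x ∈ Ioo (0:ℝ) 1, x < (q₂ : ℝ ≃ₜ ℝ) x := by
    intro x hx
    rw [hq₂, mul_apz]
    exact lt_of_lt_of_le (h0_bump hx) (hminv_ge _)
  obtain ⟨P₁, hP₁⟩ := conj_exists q₁ h0 q₁0 q₁b h0_0 (fun x hx => h0_bump hx)
  obtain ⟨P₂, hP₂⟩ := conj_exists q₂ h0 q₂0 q₂b h0_0 (fun x hx => h0_bump hx)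
  have e₁ : q₁ = P₁⁻¹ * h0 * P₁ := by
    calc q₁ = P₁⁻¹ * (P₁ * q₁) := by group
      _ = P₁⁻¹ * (h0 * P₁) := by rw [hP₁]
      _ = P₁⁻¹ * h0 * P₁ := by group
  have e₂ : q₂ = P₂⁻¹ * h0 * P₂ := by
    calc q₂ = P₂⁻¹ * (P₂ * q₂) := by group
      _ = P₂⁻¹ * (h0 * P₂) := by rw [hP₂]
      _ = P₂⁻¹ * h0 * P₂ := by group
  have goodq₁ : Good ψ q₁ := by
    have e : q₁ = (P₁⁻¹ * gH⁻¹ * P₁) * (P₁⁻¹ * tau * P₁) := by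
      rw [e₁]; unfold h0; group
    rw [e]
    exact Good_mul ψ (Good_conj_root ψ P₁ gH⁻¹ 3 (by norm_num) (-1) gH_inv_cube_pow)
      (Good_conj_root ψ P₁ tau 2 (by norm_num) 1 tau_sq_pow)
  have goodq₂ : Good ψ q₂ := by
    have e : q₂ = (P₂⁻¹ * gH⁻¹ * P₂) * (P₂⁻¹ * tau * P₂) := by
      rw [e₂]; unfold h0; group
    rw [e]
    exact Good_mul ψ (Good_conj_root ψ P₂ gH⁻¹ 3 (by norm_num) (-1) gH_inv_cube_pow)
      (Good_conj_root ψ P₂ tau 2 (by norm_num) 1 tau_sq_pow)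
  have hdecomp : h = (q₁ * h0⁻¹) * (h0 * q₂⁻¹) := by
    rw [hq₁, hq₂, hhm]; group
  rw [hdecomp]
  exact Good_mul ψ (Good_mul ψ goodq₁ (Good_inv ψ (good_h0 ψ)))
    (Good_mul ψ (good_h0 ψ) (Good_inv ψ goodq₂))

/-! ### Every element is good -/

lemma good_all (f : HomeoZ) : Good ψ f := by
  set c := Int.fract ((f : ℝ ≃ₜ ℝ) 0) with hc
  have hfloor : ((⌊(f : ℝ ≃ₜ ℝ) 0⌋ : ℤ) : ℝ) + c = (f : ℝ ≃ₜ ℝ) 0 :=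
    Int.floor_add_fract _
  have hcases : c = 0 ∨ c ∈ Ioo (0:ℝ) 1 := by
    rcases eq_or_lt_of_le (Int.fract_nonneg ((f : ℝ ≃ₜ ℝ) 0)) with h1 | h1
    · left; exact h1.symm
    · right; exact ⟨h1, Int.fract_lt_one _⟩
  obtain ⟨s₁, hgood, hval⟩ :
      ∃ s₁ : HomeoZ, Good ψ s₁ ∧ (s₁ : ℝ ≃ₜ ℝ) 0 = (f : ℝ ≃ₜ ℝ) 0 := by
    rcases hcases with h1 | h1
    · refine ⟨tOne ^ ⌊(f : ℝ ≃ₜ ℝ) 0⌋, ?_, ?_⟩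
      · exact Good_root ψ _ 1 one_ne_zero ⌊(f : ℝ ≃ₜ ℝ) 0⌋ (pow_one _)
      · rw [tOne_zpow_ap, zero_add]
        rw [h1] at hfloor
        linarith
    · refine ⟨tOne ^ ⌊(f : ℝ ≃ₜ ℝ) 0⌋ * ucH h1, ?_, ?_⟩
      · exact Good_mul ψ (Good_root ψ _ 1 one_ne_zero _ (pow_one _))
          (Good_root ψ _ 2 (by norm_num) 1 (by rw [pow_two, ucH_sq h1, zpow_one]))
      · rw [mul_apz, ucH_0 h1, tOne_zpow_ap]
        linarith
  set hh := s₁⁻¹ * f with hhdef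
  have hh0 : (hh : ℝ ≃ₜ ℝ) 0 = 0 := by
    rw [hhdef, mul_apz, inv_apz, symm_ap_eq, hval]
  have hfh : f = s₁ * hh := by rw [hhdef]; group
  rw [hfh]
  exact Good_mul ψ hgood (good_fix0 ψ hh hh0)

end S16
/-- For a group morphism `ψ : Homeo_ℤ(ℝ) → Homeo₊(ℝ)` and `t : x ↦ x + 1`, every
connected component of the complement of `Fix(ψ(t))` is preserved (setwise) by the image
of `ψ`, and the fixed-point set of the image of `ψ` is exactly `Fix(ψ(t))`. -/
theorem stmt_16 (ψ : HomeoZ →* HomeoPlus) :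
    (∀ f : HomeoZ, ∀ x : ℝ, x ∉ {y : ℝ | (ψ tOne : ℝ ≃ₜ ℝ) y = y} →
      (ψ f : ℝ ≃ₜ ℝ) '' connectedComponentIn {y : ℝ | (ψ tOne : ℝ ≃ₜ ℝ) y = y}ᶜ x =
        connectedComponentIn {y : ℝ | (ψ tOne : ℝ ≃ₜ ℝ) y = y}ᶜ x) ∧
      {x : ℝ | ∀ f : HomeoZ, (ψ f : ℝ ≃ₜ ℝ) x = x} =
        {x : ℝ | (ψ tOne : ℝ ≃ₜ ℝ) x = x} := by
  have good : ∀ f : HomeoZ, S16.Good ψ f := S16.good_all ψ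
  constructor
  · intro f x hx
    set F := {y : ℝ | (ψ tOne : ℝ ≃ₜ ℝ) y = y} with hF
    have main : ∀ (g : HomeoZ) (y : ℝ), y ∈ connectedComponentIn Fᶜ x →
        (ψ g : ℝ ≃ₜ ℝ) y ∈ connectedComponentIn Fᶜ x := by
      intro g y hy
      have hyU : y ∈ Fᶜ := connectedComponentIn_subset _ _ hy
      have hgyU : (ψ g : ℝ ≃ₜ ℝ) y ∈ Fᶜ := by
        intro hmem
        apply hyU
        have h2 := good g⁻¹ _ hmem
        rw [map_inv] at h2
        have h3 : ((ψ g : HomeoPlus) : ℝ ≃ₜ ℝ).symm (((ψ g : HomeoPlus) : ℝ ≃ₜ ℝ) y)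
            = y := Homeomorph.symm_apply_apply _ _
        have h4 : y = (ψ g : ℝ ≃ₜ ℝ) y := by
          calc y = ((ψ g : HomeoPlus) : ℝ ≃ₜ ℝ).symm ((ψ g : ℝ ≃ₜ ℝ) y) := h3.symm
            _ = (ψ g : ℝ ≃ₜ ℝ) y := h2
        show (ψ tOne : ℝ ≃ₜ ℝ) y = y
        rw [h4]
        exact hmem
      have hmono : StrictMono ⇑((ψ g : HomeoPlus) : ℝ ≃ₜ ℝ) := (ψ g).2
      have hseg : Set.uIcc y ((ψ g : ℝ ≃ₜ ℝ) y) ⊆ Fᶜ := by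
        intro z hz
        intro hzF
        have hfix : (ψ g : ℝ ≃ₜ ℝ) z = z := good g z hzF
        rcases le_total y ((ψ g : ℝ ≃ₜ ℝ) y) with hcase | hcase
        · rw [Set.uIcc_of_le hcase] at hz
          have h4 : (ψ g : ℝ ≃ₜ ℝ) y ≤ (ψ g : ℝ ≃ₜ ℝ) z := hmono.monotone hz.1
          rw [hfix] at h4
          have h5 : z = (ψ g : ℝ ≃ₜ ℝ) y := le_antisymm hz.2 h4
          apply hgyU
          rw [← h5]
          exact hzF
        · rw [Set.uIcc_of_ge hcase] at hz
          have h4 : (ψ g : ℝ ≃ₜ ℝ) z ≤ (ψ g : ℝ ≃ₜ ℝ) y := hmono.monotone hz.2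
          rw [hfix] at h4
          have h5 : z = (ψ g : ℝ ≃ₜ ℝ) y := le_antisymm h4 hz.1
          apply hgyU
          rw [← h5]
          exact hzF
      have hsub : Set.uIcc y ((ψ g : ℝ ≃ₜ ℝ) y) ⊆ connectedComponentIn Fᶜ y :=
        isPreconnected_uIcc.subset_connectedComponentIn Set.left_mem_uIcc hseg
      have hcomp_eq : connectedComponentIn Fᶜ x = connectedComponentIn Fᶜ y :=
        connectedComponentIn_eq hy
      rw [hcomp_eq]
      exact hsub Set.right_mem_uIcc
    apply Set.eq_of_subset_of_subset
    · rintro z ⟨y, hy, rfl⟩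
      exact main f y hy
    · intro y hy
      refine ⟨((ψ f : HomeoPlus) : ℝ ≃ₜ ℝ).symm y, ?_, Homeomorph.apply_symm_apply _ _⟩
      have h2 := main f⁻¹ y hy
      have h3 : (ψ f⁻¹ : ℝ ≃ₜ ℝ) y = ((ψ f : HomeoPlus) : ℝ ≃ₜ ℝ).symm y := by
        rw [map_inv]; rfl
      rwa [h3] at h2
  · apply Set.eq_of_subset_of_subset
    · intro x hx
      exact hx tOne
    · intro x hx f
      exact good f x hx
end
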